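/- arXiv:1712.07813 — 5 statements merged into one kernel-verified Lean document; each statement's English description precedes it below -/
import Mathlib

section
/- (Chen–McKay, recurrence coefficient identity.) Let n ≥ 1, α > 0, λ ∈ ℝ with α + λ + 1 > 0, and t > 0. Let π_k(x;t) be the monic orthogonal polynomials with respect to w(x,t) = (x+t)^λ x^α e^{−x}, with recurrence coefficient α_n(t) defined by x π_n = π_{n+1} + α_n(t) π_n + β_n(t) π_{n−1}, and let R_n(t) = (λ/h_n(t)) ∫₀^∞ π_n(x;t)² w(x,t)/(x+t) dx. Then α_n(t) = 2n + 1 + α + λ − t R_n(t). -/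
open MeasureTheory Set Finset

open MeasureTheory Set Finset Polynomial Filter Topology
namespace CMK

lemma int_rpow_exp {s : ℝ} (hs : -1 < s) :
    IntegrableOn (fun x : ℝ => x ^ s * Real.exp (-x)) (Ioi 0) := by
  have h := integrableOn_rpow_mul_exp_neg_mul_rpow hs (zero_lt_one : (0:ℝ) < 1) one_pos
  refine h.congr_fun (fun x hx => ?_) measurableSet_Ioi
  dsimp only; rw [Real.rpow_one]; ring_nf

lemma poly_bound (q : Polynomial ℝ) :
    ∃ C : ℝ, 0 ≤ C ∧ ∀ x : ℝ, 0 < x → |q.eval x| ≤ C * (1 + x ^ q.natDegree) := by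
  refine ⟨∑ i ∈ range (q.natDegree + 1), |q.coeff i|,
    Finset.sum_nonneg fun i _ => abs_nonneg _, fun x hx => ?_⟩
  have hpow : ∀ i ∈ range (q.natDegree + 1), x ^ i ≤ 1 + x ^ q.natDegree := by
    intro i hi
    rcases le_total x 1 with hx1 | hx1
    · have : x ^ i ≤ 1 := pow_le_one₀ hx.le hx1
      nlinarith [pow_nonneg hx.le q.natDegree]
    · have : x ^ i ≤ x ^ q.natDegree :=
        pow_le_pow_right₀ hx1 (Nat.lt_succ_iff.mp (Finset.mem_range.mp hi))
      linarith
  calc |q.eval x| = |∑ i ∈ range (q.natDegree + 1), q.coeff i * x ^ i| := by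
        rw [Polynomial.eval_eq_sum_range]
    _ ≤ ∑ i ∈ range (q.natDegree + 1), |q.coeff i * x ^ i| := Finset.abs_sum_le_sum_abs _ _
    _ ≤ ∑ i ∈ range (q.natDegree + 1), |q.coeff i| * (1 + x ^ q.natDegree) := by
        refine Finset.sum_le_sum fun i hi => ?_
        rw [abs_mul, abs_of_nonneg (pow_nonneg hx.le i)]
        exact mul_le_mul_of_nonneg_left (hpow i hi) (abs_nonneg _)
    _ = (∑ i ∈ range (q.natDegree + 1), |q.coeff i|) * (1 + x ^ q.natDegree) := by
        rw [Finset.sum_mul]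

lemma rpow_shift_bound {lam t : ℝ} (ht : 0 < t) :
    ∃ (C : ℝ) (N : ℕ), 0 ≤ C ∧ ∀ x : ℝ, 0 < x → (x + t) ^ lam ≤ C * (1 + x ^ N) := by
  rcases le_total lam 0 with hl | hl
  · refine ⟨t ^ lam, 0, Real.rpow_nonneg ht.le _, fun x hx => ?_⟩
    have h1 : (x + t) ^ lam ≤ t ^ lam :=
      Real.rpow_le_rpow_of_nonpos ht (by linarith) hl
    have h2 : (0:ℝ) ≤ t ^ lam := Real.rpow_nonneg ht.le _
    simpa using by nlinarith
  · set N := ⌈lam⌉₊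
    refine ⟨(1 + t) ^ lam * 2 ^ N, N, by positivity, fun x hx => ?_⟩
    have hx1 : (0:ℝ) < 1 + x := by linarith
    have h1 : (x + t) ^ lam ≤ ((1 + t) * (1 + x)) ^ lam := by
      apply Real.rpow_le_rpow (by linarith) (by nlinarith) hl
    have h2 : ((1 + t) * (1 + x)) ^ lam = (1 + t) ^ lam * (1 + x) ^ lam :=
      Real.mul_rpow (by linarith) hx1.le
    have h3 : (1 + x) ^ lam ≤ (1 + x) ^ (N : ℝ) :=
      Real.rpow_le_rpow_of_exponent_le (by linarith) (Nat.le_ceil lam)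
    have h4 : (1 + x) ^ (N : ℝ) = (1 + x) ^ N := Real.rpow_natCast _ _
    have h5 : (1 + x) ^ N ≤ 2 ^ N * (1 + x ^ N) := by
      rcases le_total x 1 with hx2 | hx2
      · have : (1 + x) ^ N ≤ 2 ^ N := pow_le_pow_left₀ hx1.le (by linarith) N
        nlinarith [pow_nonneg hx.le N, pow_pos (show (0:ℝ) < 2 by norm_num) N]
      · have : (1 + x) ^ N ≤ (2 * x) ^ N := pow_le_pow_left₀ hx1.le (by linarith) N
        rw [mul_pow] at this
        nlinarith [pow_pos (show (0:ℝ) < 2 by norm_num) N, pow_nonneg hx.le N]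
    have hpos : (0:ℝ) ≤ (1 + t) ^ lam := Real.rpow_nonneg (by linarith) _
    calc (x + t) ^ lam ≤ (1 + t) ^ lam * (1 + x) ^ N := by
          rw [← h4]; nlinarith [h3, Real.rpow_nonneg hx1.le (N:ℝ)]
      _ ≤ (1 + t) ^ lam * (2 ^ N * (1 + x ^ N)) := by nlinarith
      _ = (1 + t) ^ lam * 2 ^ N * (1 + x ^ N) := by ring

end CMK
namespace CMK2

variable {α lam t : ℝ}

lemma contOn_W (ht : 0 < t) :
    ContinuousOn (fun x : ℝ => (x + t) ^ lam * x ^ α * Real.exp (-x)) (Ioi 0) := by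
  intro x hx
  have hx0 : (0:ℝ) < x := hx
  have h1 : ContinuousAt (fun y : ℝ => (y + t) ^ lam) x :=
    ContinuousAt.rpow_const (by fun_prop) (Or.inl (ne_of_gt (by linarith)))
  have h2 : ContinuousAt (fun y : ℝ => y ^ α) x :=
    ContinuousAt.rpow_const (by fun_prop) (Or.inl (ne_of_gt hx0))
  exact (((h1.mul h2).mul (by fun_prop : ContinuousAt (fun y : ℝ => Real.exp (-y)) x)).continuousWithinAt)

lemma intOn_pow_mul (hα : 0 < α) (k : ℕ) :
    IntegrableOn (fun x : ℝ => x ^ k * (x ^ α * Real.exp (-x))) (Ioi 0) := by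
  have h := CMK.int_rpow_exp (s := α + k) (by have : (0:ℝ) ≤ (k:ℝ) := Nat.cast_nonneg k; linarith)
  refine h.congr_fun (fun x hx => ?_) measurableSet_Ioi
  have hx : (0:ℝ) < x := hx
  dsimp only
  rw [Real.rpow_add hx, Real.rpow_natCast]
  ring

lemma integrableOn_polyW (hα : 0 < α) (ht : 0 < t) (q : Polynomial ℝ) :
    IntegrableOn (fun x : ℝ =>
      q.eval x * ((x + t) ^ lam * x ^ α * Real.exp (-x))) (Ioi 0) := by
  obtain ⟨C1, hC1, hb1⟩ := CMK.poly_bound q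
  obtain ⟨C2, N, hC2, hb2⟩ := CMK.rpow_shift_bound (lam := lam) ht
  set d := q.natDegree
  have hg : IntegrableOn (fun x : ℝ =>
      C1 * C2 * ((1 + x ^ d) * (1 + x ^ N) * (x ^ α * Real.exp (-x)))) (Ioi 0) := by
    have h0 := intOn_pow_mul hα 0
    have hd := intOn_pow_mul hα d
    have hN := intOn_pow_mul hα N
    have hdN := intOn_pow_mul hα (d + N)
    have hsum := (((h0.add hd).add hN).add hdN).const_mul (C1 * C2)
    refine IntegrableOn.congr_fun hsum (fun x _ => ?_) measurableSet_Ioi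
    simp only [Pi.add_apply, pow_zero, pow_add]
    ring
  refine Integrable.mono' hg ?_ ?_
  · exact ((Polynomial.continuousOn q).mul (contOn_W ht)).aestronglyMeasurable
      measurableSet_Ioi
  · filter_upwards [self_mem_ae_restrict measurableSet_Ioi] with x hx
    have hx0 : (0:ℝ) < x := hx
    have hW : (0:ℝ) ≤ (x + t) ^ lam := Real.rpow_nonneg (by linarith) _
    have hxa : (0:ℝ) ≤ x ^ α := Real.rpow_nonneg hx0.le _
    have he : (0:ℝ) < Real.exp (-x) := Real.exp_pos _
    rw [norm_mul, Real.norm_eq_abs, Real.norm_eq_abs,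
      abs_of_nonneg (by positivity : (0:ℝ) ≤ (x + t) ^ lam * x ^ α * Real.exp (-x))]
    have h1 := hb1 x hx0
    have h2 := hb2 x hx0
    have hd0 : (0:ℝ) ≤ 1 + x ^ d := by positivity
    have hN0 : (0:ℝ) ≤ 1 + x ^ N := by positivity
    calc |q.eval x| * ((x + t) ^ lam * x ^ α * Real.exp (-x))
        ≤ (C1 * (1 + x ^ d)) * ((C2 * (1 + x ^ N)) * x ^ α * Real.exp (-x)) := by
          apply mul_le_mul h1 _ (by positivity) (by positivity)
          apply mul_le_mul_of_nonneg_right _ he.le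
          exact mul_le_mul_of_nonneg_right h2 hxa
      _ = C1 * C2 * ((1 + x ^ d) * (1 + x ^ N) * (x ^ α * Real.exp (-x))) := by ring

lemma integrableOn_polyW_div (hα : 0 < α) (ht : 0 < t) (q : Polynomial ℝ) :
    IntegrableOn (fun x : ℝ =>
      q.eval x * ((x + t) ^ lam * x ^ α * Real.exp (-x)) / (x + t)) (Ioi 0) := by
  have hg := ((integrableOn_polyW (lam := lam) hα ht q).abs.const_mul (1 / t))
  refine Integrable.mono' hg ?_ ?_
  · apply ContinuousOn.aestronglyMeasurable _ measurableSet_Ioi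
    apply ((Polynomial.continuousOn q).mul (contOn_W ht)).div (by fun_prop)
    intro x hx; have hx0 : (0:ℝ) < x := hx
    exact ne_of_gt (by linarith)
  · filter_upwards [self_mem_ae_restrict measurableSet_Ioi] with x hx
    have hx0 : (0:ℝ) < x := hx
    have hxt : (0:ℝ) < x + t := by linarith
    have h1 : (1:ℝ) ≤ t⁻¹ * (x + t) := by
      rw [inv_mul_eq_div, le_div_iff₀ ht]; linarith
    rw [Real.norm_eq_abs, abs_div, abs_of_pos hxt, div_le_iff₀ hxt, one_div]
    set A := q.eval x * ((x + t) ^ lam * x ^ α * Real.exp (-x))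
    nlinarith [mul_nonneg (abs_nonneg A) (sub_nonneg.mpr h1), abs_nonneg A]

end CMK2
namespace CMK3

lemma orth_lower {α lam t : ℝ} (hα : 0 < α) (ht : 0 < t)
    (p : ℕ → Polynomial ℝ) (h : ℕ → ℝ)
    (hmonic : ∀ k, (p k).Monic) (hdeg : ∀ k, (p k).natDegree = k)
    (horth : ∀ j k, ∫ x in Ioi (0:ℝ),
        (p j).eval x * (p k).eval x * ((x + t) ^ lam * x ^ α * Real.exp (-x))
      = if j = k then h j else 0)
    (n : ℕ) (hn0 : 0 < n) :
    ∀ q : Polynomial ℝ, q.degree < (n : ℕ) →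
      ∫ x in Ioi (0:ℝ),
        (p n).eval x * q.eval x * ((x + t) ^ lam * x ^ α * Real.exp (-x)) = 0 := by
  suffices H : ∀ d : ℕ, ∀ q : Polynomial ℝ, q.natDegree ≤ d → q.degree < (n : ℕ) →
      ∫ x in Ioi (0:ℝ),
        (p n).eval x * q.eval x * ((x + t) ^ lam * x ^ α * Real.exp (-x)) = 0 by
    exact fun q hq => H q.natDegree q le_rfl hq
  intro d
  induction d with
  | zero =>
    intro q hq0 hqn
    have hqc : q = Polynomial.C (q.coeff 0) := Polynomial.eq_C_of_natDegree_le_zero hq0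
    have hp0 : p 0 = 1 := (hmonic 0).natDegree_eq_zero.mp (hdeg 0)
    have h0 := horth n 0
    rw [if_neg (Nat.pos_iff_ne_zero.mp hn0), hp0] at h0
    simp only [Polynomial.eval_one, mul_one] at h0
    calc ∫ x in Ioi (0:ℝ),
          (p n).eval x * q.eval x * ((x + t) ^ lam * x ^ α * Real.exp (-x))
        = ∫ x in Ioi (0:ℝ),
          (q.coeff 0) * ((p n).eval x * ((x + t) ^ lam * x ^ α * Real.exp (-x))) := by
          congr 1; funext x
          conv_lhs => rw [hqc]
          simp only [Polynomial.eval_C]; ring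
      _ = (q.coeff 0) * ∫ x in Ioi (0:ℝ),
          (p n).eval x * ((x + t) ^ lam * x ^ α * Real.exp (-x)) :=
          integral_const_mul _ _
      _ = 0 := by rw [h0, mul_zero]
  | succ d ih =>
    intro q hqd hqn
    by_cases hq0 : q = 0
    · simp [hq0]
    · set m := q.natDegree with hm
      set c := q.leadingCoeff with hc
      have hc0 : c ≠ 0 := Polynomial.leadingCoeff_ne_zero.mpr hq0
      set r := q - Polynomial.C c * p m with hr
      have hdeg1 : (Polynomial.C c * p m).degree = q.degree := by
        rw [Polynomial.degree_C_mul hc0, Polynomial.degree_eq_natDegree hq0,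
          Polynomial.degree_eq_natDegree (hmonic m).ne_zero, hdeg m]
      have hlc1 : q.leadingCoeff = (Polynomial.C c * p m).leadingCoeff := by
        rw [Polynomial.leadingCoeff_mul' (by
          rw [Polynomial.leadingCoeff_C, (hmonic m).leadingCoeff, mul_one]; exact hc0),
          Polynomial.leadingCoeff_C, (hmonic m).leadingCoeff, mul_one]
      have hrdeg : r.degree < q.degree := Polynomial.degree_sub_lt hdeg1.symm hq0 hlc1
      have hrd : r.natDegree ≤ d := by
        by_cases hr0 : r = 0
        · simp [hr0]
        · have := Polynomial.natDegree_lt_natDegree hr0 hrdeg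
          omega
      have hrn : r.degree < (n : ℕ) := lt_trans hrdeg hqn
      have hmn : m ≠ n := by
        have : (m : WithBot ℕ) < (n : WithBot ℕ) := by
          rw [← Polynomial.degree_eq_natDegree hq0]; exact_mod_cast hqn
        exact Nat.ne_of_lt (by exact_mod_cast this)
      have int1 : IntegrableOn (fun x : ℝ =>
          (p n).eval x * (p m).eval x * ((x + t) ^ lam * x ^ α * Real.exp (-x))) (Ioi 0) :=
        (CMK2.integrableOn_polyW (lam := lam) hα ht (p n * p m)).congr_fun
          (fun x _ => by simp [Polynomial.eval_mul]) measurableSet_Ioi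
      have int2 : IntegrableOn (fun x : ℝ =>
          (p n).eval x * r.eval x * ((x + t) ^ lam * x ^ α * Real.exp (-x))) (Ioi 0) :=
        (CMK2.integrableOn_polyW (lam := lam) hα ht (p n * r)).congr_fun
          (fun x _ => by simp [Polynomial.eval_mul]) measurableSet_Ioi
      have key : ∀ x : ℝ, (p n).eval x * q.eval x * ((x + t) ^ lam * x ^ α * Real.exp (-x))
          = c * ((p n).eval x * (p m).eval x * ((x + t) ^ lam * x ^ α * Real.exp (-x)))
            + (p n).eval x * r.eval x * ((x + t) ^ lam * x ^ α * Real.exp (-x)) := by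
        intro x
        have hqeq : q = Polynomial.C c * p m + r := by rw [hr]; ring
        conv_lhs => rw [hqeq]
        simp only [Polynomial.eval_add, Polynomial.eval_mul, Polynomial.eval_C]
        ring
      calc ∫ x in Ioi (0:ℝ),
            (p n).eval x * q.eval x * ((x + t) ^ lam * x ^ α * Real.exp (-x))
          = ∫ x in Ioi (0:ℝ),
            (c * ((p n).eval x * (p m).eval x * ((x + t) ^ lam * x ^ α * Real.exp (-x)))
              + (p n).eval x * r.eval x * ((x + t) ^ lam * x ^ α * Real.exp (-x))) := by
            congr 1; funext x; exact key x
        _ = c * (∫ x in Ioi (0:ℝ),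
              (p n).eval x * (p m).eval x * ((x + t) ^ lam * x ^ α * Real.exp (-x)))
            + ∫ x in Ioi (0:ℝ),
              (p n).eval x * r.eval x * ((x + t) ^ lam * x ^ α * Real.exp (-x)) := by
            rw [integral_add (int1.const_mul c) int2, integral_const_mul]
        _ = 0 := by
            rw [horth n m, if_neg (fun hh => hmn hh.symm), ih r hrd hrn, mul_zero, add_zero]

end CMK3
namespace CMK4

lemma ftc {α lam t : ℝ} (hα : 0 < α) (ht : 0 < t) (P : Polynomial ℝ) :
    (∫ x in Ioi (0:ℝ),
        (Polynomial.C (α + 1 + lam) * P + Polynomial.X * Polynomial.derivative P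
          - Polynomial.X * P).eval x * ((x + t) ^ lam * x ^ α * Real.exp (-x)))
      = lam * t * ∫ x in Ioi (0:ℝ),
          P.eval x * ((x + t) ^ lam * x ^ α * Real.exp (-x)) / (x + t) := by
  set Q : Polynomial ℝ := Polynomial.C (α + 1 + lam) * P + Polynomial.X * Polynomial.derivative P
    - Polynomial.X * P with hQ
  set F : ℝ → ℝ := fun x => x ^ (α + 1) * (x + t) ^ lam * P.eval x * Real.exp (-x) with hF
  set f' : ℝ → ℝ := fun x =>
    Q.eval x * ((x + t) ^ lam * x ^ α * Real.exp (-x))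
      - lam * t * (P.eval x * ((x + t) ^ lam * x ^ α * Real.exp (-x)) / (x + t)) with hf'
  have hderiv : ∀ x ∈ Ioi (0:ℝ), HasDerivAt F (f' x) x := by
    intro x hx
    have hx0 : (0:ℝ) < x := hx
    have hxt : (0:ℝ) < x + t := by linarith
    have h1 : HasDerivAt (fun y : ℝ => y ^ (α + 1)) ((α + 1) * x ^ α) x := by
      have := Real.hasDerivAt_rpow_const (x := x) (p := α + 1) (Or.inl hx0.ne')
      simpa [show α + 1 - 1 = α by ring] using this
    have h2 : HasDerivAt (fun y : ℝ => (y + t) ^ lam) (lam * (x + t) ^ (lam - 1)) x := by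
      have h2a := Real.hasDerivAt_rpow_const (x := x + t) (p := lam) (Or.inl hxt.ne')
      have h2b : HasDerivAt (fun y : ℝ => y + t) 1 x := (hasDerivAt_id x).add_const t
      have := h2a.comp x h2b; simp only [mul_one] at this; exact this
    have h3 : HasDerivAt (fun y : ℝ => P.eval y) (P.derivative.eval x) x := P.hasDerivAt x
    have h4 : HasDerivAt (fun y : ℝ => Real.exp (-y)) (-Real.exp (-x)) x := by
      have := (Real.hasDerivAt_exp (-x)).comp x (hasDerivAt_neg' x); simp only [mul_neg, mul_one] at this; exact this
    have hFd := ((h1.mul h2).mul h3).mul h4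
    refine HasDerivAt.congr_deriv (f := F) hFd ?_
    have e1 : x ^ (α + 1) = x ^ α * x := by
      rw [Real.rpow_add hx0, Real.rpow_one]
    have e2 : (x + t) ^ (lam - 1) = (x + t) ^ lam / (x + t) := by
      rw [Real.rpow_sub hxt, Real.rpow_one]
    rw [hf']
    simp only [hQ, Polynomial.eval_sub, Polynomial.eval_add, Polynomial.eval_mul,
      Polynomial.eval_C, Polynomial.eval_X, Pi.mul_apply]
    rw [e1, e2]
    field_simp
    ring
  have hcont : ContinuousWithinAt F (Ici (0:ℝ)) 0 := by
    apply ContinuousAt.continuousWithinAt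
    have h1 : ContinuousAt (fun y : ℝ => y ^ (α + 1)) 0 :=
      Real.continuousAt_rpow_const _ _ (Or.inr (by linarith))
    have h2 : ContinuousAt (fun y : ℝ => (y + t) ^ lam) 0 :=
      ContinuousAt.rpow_const (by fun_prop) (Or.inl (by simpa using ht.ne'))
    exact ((h1.mul h2).mul (Polynomial.continuousAt P)).mul (by fun_prop)
  have hF0 : F 0 = 0 := by
    have hz : (0:ℝ) ^ (α + 1) = 0 := Real.zero_rpow (ne_of_gt (by linarith))
    simp [hF, hz]
  have htend : Tendsto F atTop (𝓝 0) := by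
    obtain ⟨C1, hC1, hb1⟩ := CMK.poly_bound P
    obtain ⟨C2, N, hC2, hb2⟩ := CMK.rpow_shift_bound (lam := lam) ht
    set K := ⌈α + 1⌉₊ with hK
    set G : Polynomial ℝ := Polynomial.X ^ K * (Polynomial.C C2 * (1 + Polynomial.X ^ N))
      * (Polynomial.C C1 * (1 + Polynomial.X ^ P.natDegree)) with hG
    refine squeeze_zero_norm' (a := fun x => G.eval x / Real.exp x) ?_ G.tendsto_div_exp_atTop
    · filter_upwards [eventually_ge_atTop (1:ℝ)] with x hx1
      have hx0 : (0:ℝ) < x := by linarith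
      have e1 : x ^ (α + 1) ≤ x ^ K := by
        rw [← Real.rpow_natCast x K]
        exact Real.rpow_le_rpow_of_exponent_le hx1 (Nat.le_ceil _)
      have e2 := hb2 x hx0
      have e3 := hb1 x hx0
      have hxa : (0:ℝ) ≤ x ^ (α + 1) := Real.rpow_nonneg hx0.le _
      have hxl : (0:ℝ) ≤ (x + t) ^ lam := Real.rpow_nonneg (by linarith) _
      have he : (0:ℝ) < Real.exp (-x) := Real.exp_pos _
      rw [Real.norm_eq_abs, hF]
      have habs : |x ^ (α + 1) * (x + t) ^ lam * P.eval x * Real.exp (-x)|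
          = x ^ (α + 1) * (x + t) ^ lam * |P.eval x| * Real.exp (-x) := by
        rw [abs_mul, abs_mul, abs_mul, abs_of_nonneg hxa, abs_of_nonneg hxl,
          abs_of_pos he]
      rw [habs, hG]
      have hGev : (Polynomial.X ^ K * (Polynomial.C C2 * (1 + Polynomial.X ^ N))
          * (Polynomial.C C1 * (1 + Polynomial.X ^ P.natDegree))).eval x
          = x ^ K * (C2 * (1 + x ^ N)) * (C1 * (1 + x ^ P.natDegree)) := by
        simp [Polynomial.eval_mul, Polynomial.eval_add, Polynomial.eval_pow]
      rw [hGev, Real.exp_neg, div_eq_mul_inv]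
      have hstep : x ^ (α + 1) * (x + t) ^ lam * |P.eval x|
          ≤ x ^ K * (C2 * (1 + x ^ N)) * (C1 * (1 + x ^ P.natDegree)) := by
        have t1 : x ^ (α + 1) * (x + t) ^ lam ≤ x ^ K * (C2 * (1 + x ^ N)) := by
          apply mul_le_mul e1 e2 hxl (by positivity)
        apply mul_le_mul t1 e3 (abs_nonneg _) (by positivity)
      exact mul_le_mul_of_nonneg_right hstep (le_of_lt (by positivity))
  have hint1 : IntegrableOn (fun x : ℝ =>
      Q.eval x * ((x + t) ^ lam * x ^ α * Real.exp (-x))) (Ioi 0) :=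
    CMK2.integrableOn_polyW hα ht Q
  have hint2 : IntegrableOn (fun x : ℝ =>
      P.eval x * ((x + t) ^ lam * x ^ α * Real.exp (-x)) / (x + t)) (Ioi 0) :=
    CMK2.integrableOn_polyW_div hα ht P
  have hf'int : IntegrableOn f' (Ioi 0) := hint1.sub (hint2.const_mul (lam * t))
  have hmain := integral_Ioi_of_hasDerivAt_of_tendsto hcont hderiv hf'int htend
  rw [hF0, sub_zero] at hmain
  rw [hf'] at hmain
  rw [integral_sub hint1 (hint2.const_mul (lam * t)), integral_const_mul] at hmain
  linarith [hmain]

end CMK4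


/-- Chen–McKay: for the monic orthogonal polynomials with respect to the
perturbed Laguerre weight `w(x,t) = (x+t)^λ x^α e^{−x}`, the recurrence coefficient
`α_n(t)` satisfies `α_n(t) = 2n + 1 + α + λ − t R_n(t)`, where
`R_n(t) = (λ/h_n) ∫₀^∞ π_n(x)² w(x,t)/(x+t) dx`. -/
theorem recurrence_coefficient_alpha_eq
    (n : ℕ) (hn : 1 ≤ n) (α lam t : ℝ) (hα : 0 < α) (hsum : α + lam + 1 > 0) (ht : 0 < t)
    (p : ℕ → Polynomial ℝ) (h : ℕ → ℝ) (a b : ℝ)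
    (hmonic : ∀ k, (p k).Monic)
    (hdeg : ∀ k, (p k).natDegree = k)
    (hpos : ∀ k, 0 < h k)
    (horth : ∀ j k,
      ∫ x in Set.Ioi (0 : ℝ),
          (p j).eval x * (p k).eval x * ((x + t) ^ lam * x ^ α * Real.exp (-x))
        = if j = k then h j else 0)
    (hrec : Polynomial.X * p n
        = p (n + 1) + Polynomial.C a * p n + Polynomial.C b * p (n - 1)) :
    a = 2 * n + 1 + α + lam -
        t * ((lam / h n) * ∫ x in Set.Ioi (0 : ℝ),
          (p n).eval x ^ 2 * ((x + t) ^ lam * x ^ α * Real.exp (-x)) / (x + t)) := by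
  have hh : h n ≠ 0 := (hpos n).ne'
  set P : Polynomial ℝ := (p n) ^ 2 with hP
  have hftc := CMK4.ftc (lam := lam) hα ht P
  set Int : ℝ := ∫ x in Set.Ioi (0 : ℝ),
      (p n).eval x ^ 2 * ((x + t) ^ lam * x ^ α * Real.exp (-x)) / (x + t) with hInt
  -- the RHS of the FTC identity matches `Int`
  have hrhs : (∫ x in Set.Ioi (0:ℝ),
      P.eval x * ((x + t) ^ lam * x ^ α * Real.exp (-x)) / (x + t)) = Int := by
    rw [hInt]; congr 1; funext x
    simp [hP, Polynomial.eval_pow]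
  -- integrability of the three pieces
  have i1 : IntegrableOn (fun x : ℝ => (Polynomial.C (α + 1 + lam) * P).eval x *
      ((x + t) ^ lam * x ^ α * Real.exp (-x))) (Set.Ioi 0) :=
    CMK2.integrableOn_polyW hα ht _
  have i2 : IntegrableOn (fun x : ℝ => (Polynomial.X * Polynomial.derivative P).eval x *
      ((x + t) ^ lam * x ^ α * Real.exp (-x))) (Set.Ioi 0) :=
    CMK2.integrableOn_polyW hα ht _
  have i3 : IntegrableOn (fun x : ℝ => (Polynomial.X * P).eval x *
      ((x + t) ^ lam * x ^ α * Real.exp (-x))) (Set.Ioi 0) :=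
    CMK2.integrableOn_polyW hα ht _
  have hsplit : (∫ x in Set.Ioi (0:ℝ),
      (Polynomial.C (α + 1 + lam) * P + Polynomial.X * Polynomial.derivative P
        - Polynomial.X * P).eval x * ((x + t) ^ lam * x ^ α * Real.exp (-x)))
      = (∫ x in Set.Ioi (0:ℝ), (Polynomial.C (α + 1 + lam) * P).eval x *
          ((x + t) ^ lam * x ^ α * Real.exp (-x)))
        + (∫ x in Set.Ioi (0:ℝ), (Polynomial.X * Polynomial.derivative P).eval x *
          ((x + t) ^ lam * x ^ α * Real.exp (-x)))
        - (∫ x in Set.Ioi (0:ℝ), (Polynomial.X * P).eval x *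
          ((x + t) ^ lam * x ^ α * Real.exp (-x))) := by
    have e123 : (∫ x in Set.Ioi (0:ℝ),
        ((Polynomial.C (α + 1 + lam) * P).eval x * ((x + t) ^ lam * x ^ α * Real.exp (-x))
          + (Polynomial.X * Polynomial.derivative P).eval x * ((x + t) ^ lam * x ^ α * Real.exp (-x))
          - (Polynomial.X * P).eval x * ((x + t) ^ lam * x ^ α * Real.exp (-x))))
        = (∫ x in Set.Ioi (0:ℝ),
            ((Polynomial.C (α + 1 + lam) * P).eval x * ((x + t) ^ lam * x ^ α * Real.exp (-x))
            + (Polynomial.X * Polynomial.derivative P).eval x * ((x + t) ^ lam * x ^ α * Real.exp (-x))))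
          - ∫ x in Set.Ioi (0:ℝ), (Polynomial.X * P).eval x * ((x + t) ^ lam * x ^ α * Real.exp (-x)) :=
      integral_sub (i1.add i2) i3
    have e12 : (∫ x in Set.Ioi (0:ℝ),
        ((Polynomial.C (α + 1 + lam) * P).eval x * ((x + t) ^ lam * x ^ α * Real.exp (-x))
        + (Polynomial.X * Polynomial.derivative P).eval x * ((x + t) ^ lam * x ^ α * Real.exp (-x))))
        = (∫ x in Set.Ioi (0:ℝ), (Polynomial.C (α + 1 + lam) * P).eval x * ((x + t) ^ lam * x ^ α * Real.exp (-x)))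
          + ∫ x in Set.Ioi (0:ℝ), (Polynomial.X * Polynomial.derivative P).eval x * ((x + t) ^ lam * x ^ α * Real.exp (-x)) :=
      integral_add i1 i2
    calc (∫ x in Set.Ioi (0:ℝ),
        (Polynomial.C (α + 1 + lam) * P + Polynomial.X * Polynomial.derivative P
          - Polynomial.X * P).eval x * ((x + t) ^ lam * x ^ α * Real.exp (-x)))
        = ∫ x in Set.Ioi (0:ℝ),
          ((Polynomial.C (α + 1 + lam) * P).eval x * ((x + t) ^ lam * x ^ α * Real.exp (-x))
            + (Polynomial.X * Polynomial.derivative P).eval x * ((x + t) ^ lam * x ^ α * Real.exp (-x))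
            - (Polynomial.X * P).eval x * ((x + t) ^ lam * x ^ α * Real.exp (-x))) := by
          congr 1; funext x
          simp only [Polynomial.eval_add, Polynomial.eval_sub]
          ring
      _ = (∫ x in Set.Ioi (0:ℝ),
            ((Polynomial.C (α + 1 + lam) * P).eval x * ((x + t) ^ lam * x ^ α * Real.exp (-x))
            + (Polynomial.X * Polynomial.derivative P).eval x * ((x + t) ^ lam * x ^ α * Real.exp (-x))))
          - ∫ x in Set.Ioi (0:ℝ), (Polynomial.X * P).eval x * ((x + t) ^ lam * x ^ α * Real.exp (-x)) := e123
      _ = _ := by rw [e12]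
  -- first piece
  have hA1 : (∫ x in Set.Ioi (0:ℝ), (Polynomial.C (α + 1 + lam) * P).eval x *
      ((x + t) ^ lam * x ^ α * Real.exp (-x))) = (α + 1 + lam) * h n := by
    have : (∫ x in Set.Ioi (0:ℝ), (Polynomial.C (α + 1 + lam) * P).eval x *
        ((x + t) ^ lam * x ^ α * Real.exp (-x)))
        = (α + 1 + lam) * ∫ x in Set.Ioi (0:ℝ), (p n).eval x * (p n).eval x *
          ((x + t) ^ lam * x ^ α * Real.exp (-x)) := by
      rw [← integral_const_mul]
      congr 1; funext x
      simp only [hP, Polynomial.eval_mul, Polynomial.eval_C, Polynomial.eval_pow]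
      ring
    rw [this, horth n n, if_pos rfl]
  -- third piece
  have hA3 : (∫ x in Set.Ioi (0:ℝ), (Polynomial.X * P).eval x *
      ((x + t) ^ lam * x ^ α * Real.exp (-x))) = a * h n := by
    have hXP : Polynomial.X * P
        = (p (n+1)) * p n + Polynomial.C a * (p n * p n) + Polynomial.C b * (p (n-1) * p n) := by
      rw [hP, sq, ← mul_assoc, hrec]; ring
    have j1 : IntegrableOn (fun x : ℝ => (p (n+1)).eval x * (p n).eval x *
        ((x + t) ^ lam * x ^ α * Real.exp (-x))) (Set.Ioi 0) :=
      (CMK2.integrableOn_polyW (lam := lam) hα ht (p (n+1) * p n)).congr_fun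
        (fun x _ => by simp [Polynomial.eval_mul]) measurableSet_Ioi
    have j2 : IntegrableOn (fun x : ℝ => (p n).eval x * (p n).eval x *
        ((x + t) ^ lam * x ^ α * Real.exp (-x))) (Set.Ioi 0) :=
      (CMK2.integrableOn_polyW (lam := lam) hα ht (p n * p n)).congr_fun
        (fun x _ => by simp [Polynomial.eval_mul]) measurableSet_Ioi
    have j3 : IntegrableOn (fun x : ℝ => (p (n-1)).eval x * (p n).eval x *
        ((x + t) ^ lam * x ^ α * Real.exp (-x))) (Set.Ioi 0) :=
      (CMK2.integrableOn_polyW (lam := lam) hα ht (p (n-1) * p n)).congr_fun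
        (fun x _ => by simp [Polynomial.eval_mul]) measurableSet_Ioi
    calc (∫ x in Set.Ioi (0:ℝ), (Polynomial.X * P).eval x *
        ((x + t) ^ lam * x ^ α * Real.exp (-x)))
        = ∫ x in Set.Ioi (0:ℝ),
            ((p (n+1)).eval x * (p n).eval x * ((x + t) ^ lam * x ^ α * Real.exp (-x))
            + a * ((p n).eval x * (p n).eval x * ((x + t) ^ lam * x ^ α * Real.exp (-x)))
            + b * ((p (n-1)).eval x * (p n).eval x * ((x + t) ^ lam * x ^ α * Real.exp (-x)))) := by
          congr 1; funext x
          rw [hXP]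
          simp only [Polynomial.eval_add, Polynomial.eval_mul, Polynomial.eval_C]
          ring
      _ = (∫ x in Set.Ioi (0:ℝ), (p (n+1)).eval x * (p n).eval x *
            ((x + t) ^ lam * x ^ α * Real.exp (-x)))
          + a * (∫ x in Set.Ioi (0:ℝ), (p n).eval x * (p n).eval x *
            ((x + t) ^ lam * x ^ α * Real.exp (-x)))
          + b * (∫ x in Set.Ioi (0:ℝ), (p (n-1)).eval x * (p n).eval x *
            ((x + t) ^ lam * x ^ α * Real.exp (-x))) := by
          have eA : (∫ x in Set.Ioi (0:ℝ),
              ((p (n+1)).eval x * (p n).eval x * ((x + t) ^ lam * x ^ α * Real.exp (-x))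
              + a * ((p n).eval x * (p n).eval x * ((x + t) ^ lam * x ^ α * Real.exp (-x)))
              + b * ((p (n-1)).eval x * (p n).eval x * ((x + t) ^ lam * x ^ α * Real.exp (-x)))))
              = (∫ x in Set.Ioi (0:ℝ),
                  ((p (n+1)).eval x * (p n).eval x * ((x + t) ^ lam * x ^ α * Real.exp (-x))
                  + a * ((p n).eval x * (p n).eval x * ((x + t) ^ lam * x ^ α * Real.exp (-x)))))
                + ∫ x in Set.Ioi (0:ℝ),
                  b * ((p (n-1)).eval x * (p n).eval x * ((x + t) ^ lam * x ^ α * Real.exp (-x))) :=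
            integral_add (j1.add (j2.const_mul a)) (j3.const_mul b)
          have eB : (∫ x in Set.Ioi (0:ℝ),
              ((p (n+1)).eval x * (p n).eval x * ((x + t) ^ lam * x ^ α * Real.exp (-x))
              + a * ((p n).eval x * (p n).eval x * ((x + t) ^ lam * x ^ α * Real.exp (-x)))))
              = (∫ x in Set.Ioi (0:ℝ),
                  (p (n+1)).eval x * (p n).eval x * ((x + t) ^ lam * x ^ α * Real.exp (-x)))
                + ∫ x in Set.Ioi (0:ℝ),
                  a * ((p n).eval x * (p n).eval x * ((x + t) ^ lam * x ^ α * Real.exp (-x))) :=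
            integral_add j1 (j2.const_mul a)
          rw [eA, eB, integral_const_mul, integral_const_mul]
      _ = a * h n := by
          rw [horth (n+1) n, horth n n, horth (n-1) n, if_neg (by omega), if_pos rfl,
            if_neg (by omega)]
          ring
  -- second piece
  have hA2 : (∫ x in Set.Ioi (0:ℝ), (Polynomial.X * Polynomial.derivative P).eval x *
      ((x + t) ^ lam * x ^ α * Real.exp (-x))) = 2 * n * h n := by
    set r : Polynomial ℝ := Polynomial.C 2 * (Polynomial.X * Polynomial.derivative (p n))
      - Polynomial.C (2 * (n:ℝ)) * p n with hr
    have hXdP : Polynomial.X * Polynomial.derivative P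
        = Polynomial.C (2 * (n:ℝ)) * (p n * p n) + p n * r := by
      rw [hP, Polynomial.derivative_sq, hr]; ring
    have hrdeg : r.degree < (n : ℕ) := by
      rw [Polynomial.degree_lt_iff_coeff_zero]
      intro m hm
      have hm' : (n:ℕ) ≤ m := by exact_mod_cast hm
      obtain ⟨k, rfl⟩ : ∃ k, m = k + 1 := ⟨m - 1, by omega⟩
      rw [hr]
      rw [Polynomial.coeff_sub, Polynomial.coeff_C_mul, Polynomial.coeff_C_mul,
        Polynomial.coeff_X_mul, Polynomial.coeff_derivative]
      rcases eq_or_lt_of_le hm' with heq | hlt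
      · have hco : (p n).coeff (k+1) = 1 := by
          have hcn := (hmonic n).coeff_natDegree
          rw [hdeg n] at hcn
          rw [← heq]
          exact hcn
        rw [hco]
        have hkn : ((k:ℝ) + 1) = (n:ℝ) := by exact_mod_cast heq.symm
        push_cast
        rw [hkn]; ring
      · have hco : (p n).coeff (k+1) = 0 :=
          Polynomial.coeff_eq_zero_of_natDegree_lt (by rw [hdeg n]; omega)
        rw [hco]; ring
    have j2 : IntegrableOn (fun x : ℝ => (p n).eval x * (p n).eval x *
        ((x + t) ^ lam * x ^ α * Real.exp (-x))) (Set.Ioi 0) :=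
      (CMK2.integrableOn_polyW (lam := lam) hα ht (p n * p n)).congr_fun
        (fun x _ => by simp [Polynomial.eval_mul]) measurableSet_Ioi
    have j4 : IntegrableOn (fun x : ℝ => (p n).eval x * r.eval x *
        ((x + t) ^ lam * x ^ α * Real.exp (-x))) (Set.Ioi 0) :=
      (CMK2.integrableOn_polyW (lam := lam) hα ht (p n * r)).congr_fun
        (fun x _ => by simp [Polynomial.eval_mul]) measurableSet_Ioi
    calc (∫ x in Set.Ioi (0:ℝ), (Polynomial.X * Polynomial.derivative P).eval x *
        ((x + t) ^ lam * x ^ α * Real.exp (-x)))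
        = ∫ x in Set.Ioi (0:ℝ),
            ((2 * (n:ℝ)) * ((p n).eval x * (p n).eval x * ((x + t) ^ lam * x ^ α * Real.exp (-x)))
            + (p n).eval x * r.eval x * ((x + t) ^ lam * x ^ α * Real.exp (-x))) := by
          congr 1; funext x
          rw [hXdP]
          simp only [Polynomial.eval_add, Polynomial.eval_mul, Polynomial.eval_C]
          ring
      _ = (2 * (n:ℝ)) * (∫ x in Set.Ioi (0:ℝ), (p n).eval x * (p n).eval x *
            ((x + t) ^ lam * x ^ α * Real.exp (-x)))
          + (∫ x in Set.Ioi (0:ℝ), (p n).eval x * r.eval x *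
            ((x + t) ^ lam * x ^ α * Real.exp (-x))) := by
          have eC : (∫ x in Set.Ioi (0:ℝ),
              ((2 * (n:ℝ)) * ((p n).eval x * (p n).eval x * ((x + t) ^ lam * x ^ α * Real.exp (-x)))
              + (p n).eval x * r.eval x * ((x + t) ^ lam * x ^ α * Real.exp (-x))))
              = (∫ x in Set.Ioi (0:ℝ),
                  (2 * (n:ℝ)) * ((p n).eval x * (p n).eval x * ((x + t) ^ lam * x ^ α * Real.exp (-x))))
                + ∫ x in Set.Ioi (0:ℝ),
                  (p n).eval x * r.eval x * ((x + t) ^ lam * x ^ α * Real.exp (-x)) :=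
            integral_add (j2.const_mul _) j4
          rw [eC, integral_const_mul]
      _ = 2 * n * h n := by
          rw [horth n n, if_pos rfl,
            CMK3.orth_lower hα ht p h hmonic hdeg horth n (by omega) r hrdeg]
          ring
  rw [hsplit, hA1, hA2, hA3, hrhs] at hftc
  have key : (α + 1 + lam) * h n + 2 * n * h n - a * h n = lam * t * Int := hftc
  field_simp
  nlinarith [key]
end

section
/- (Chen–McKay, recurrence coefficient identity.) Let n ≥ 1, α > 0, λ ∈ ℝ with α + λ + 1 > 0, and let t vary in an open interval of (0,∞) on which t ↦ D_n(t;α,λ) is differentiable and positive. With H_n(t) = t (d/dt) log D_n(t;α,λ), and β_n(t) the recurrence coefficient from x π_n = π_{n+1} + α_n(t) π_n + β_n(t) π_{n−1}, one has β_n(t) = n(n + α + λ) + t H_n′(t) − H_n(t) whenever H_n is differentiable at t. -/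
open MeasureTheory Set Finset Filter


lemma hasDerivAt_det_aux {n : ℕ} {A : ℝ → Matrix (Fin n) (Fin n) ℝ}
    {A' : Matrix (Fin n) (Fin n) ℝ} {t : ℝ}
    (h : ∀ j k, HasDerivAt (fun u => A u j k) (A' j k) t) :
    HasDerivAt (fun u => (A u).det)
      (∑ k, ((A t).updateCol k (fun j => A' j k)).det) t := by
  have key : ∀ σ : Equiv.Perm (Fin n),
      HasDerivAt (fun u => (Equiv.Perm.sign σ : ℝ) * ∏ i, A u (σ i) i)
        ((Equiv.Perm.sign σ : ℝ) *
          ∑ k, (∏ i ∈ Finset.univ.erase k, A t (σ i) i) * A' (σ k) k) t := by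
    intro σ
    have hp := HasDerivAt.finset_prod (u := (Finset.univ : Finset (Fin n)))
      (f := fun i u => A u (σ i) i) (f' := fun i => A' (σ i) i) (x := t)
      (fun i _ => h (σ i) i)
    have := hp.const_mul ((Equiv.Perm.sign σ : ℝ))
    simpa [smul_eq_mul] using this
  have main := HasDerivAt.fun_sum (u := (Finset.univ : Finset (Equiv.Perm (Fin n))))
    (fun σ _ => key σ)
  have hfun : (fun u => ∑ σ : Equiv.Perm (Fin n), (Equiv.Perm.sign σ : ℝ) * ∏ i, A u (σ i) i)
      = fun u => (A u).det := by
    funext u; rw [Matrix.det_apply']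
  rw [hfun] at main
  convert main using 1
  · rfl
  · rfl
  have hprod : ∀ (σ : Equiv.Perm (Fin n)) (k : Fin n),
      (∏ i, ((A t).updateCol k fun j => A' j k) (σ i) i)
        = (∏ i ∈ Finset.univ.erase k, A t (σ i) i) * A' (σ k) k := by
    intro σ k
    rw [← Finset.mul_prod_erase Finset.univ _ (Finset.mem_univ k), mul_comm]
    congr 1
    · exact Finset.prod_congr rfl fun i hi => by
        simp [Matrix.updateCol_apply, Finset.ne_of_mem_erase hi]
    · simp [Matrix.updateCol_apply]
  simp only [Finset.mul_sum]
  rw [Finset.sum_comm]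
  refine Finset.sum_congr rfl fun k _ => ?_
  rw [Matrix.det_apply']
  exact Finset.sum_congr rfl fun σ _ => by rw [hprod σ k]

lemma sum_det_updateColumn_rowscale {n : ℕ} (M : Matrix (Fin n) (Fin n) ℝ) (d : Fin n → ℝ) :
    ∑ k, (M.updateCol k (fun j => d j * M j k)).det = (∑ j, d j) * M.det := by
  have h1 : ∀ k : Fin n, (M.updateCol k fun j => d j * M j k).det
      = (M.adjugate * (Matrix.diagonal d * M)) k k := by
    intro k
    rw [← Matrix.cramer_apply, Matrix.cramer_eq_adjugate_mulVec]
    simp only [Matrix.mulVec, Matrix.mul_apply, dotProduct, Matrix.diagonal_mul]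
    refine Finset.sum_congr rfl fun j _ => ?_
    rw [Finset.sum_eq_single j (fun x _ hx => by simp [Matrix.diagonal_apply_ne' d hx]) (by simp)]
    simp [Matrix.diagonal_apply_eq, mul_assoc]
  calc ∑ k, (M.updateCol k fun j => d j * M j k).det
      = Matrix.trace (M.adjugate * (Matrix.diagonal d * M)) := by
        rw [Matrix.trace]; exact Finset.sum_congr rfl fun k _ => h1 k
    _ = Matrix.trace (Matrix.diagonal d * M * M.adjugate) := by
        rw [← Matrix.trace_mul_comm, Matrix.mul_assoc]
    _ = (∑ j, d j) * M.det := by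
        rw [Matrix.mul_assoc, Matrix.mul_adjugate]
        simp only [Matrix.trace, Matrix.diag_apply, Matrix.smul_apply, Matrix.mul_apply, Matrix.diagonal_apply, Matrix.one_apply, smul_eq_mul]
        simp [Finset.mul_sum, Finset.sum_mul, mul_comm]

lemma det_updateColumn_finsum {n : ℕ} (M : Matrix (Fin n) (Fin n) ℝ) (k : Fin n)
    {ι : Type*} (s : Finset ι) (v : ι → Fin n → ℝ) :
    (M.updateCol k (fun j => ∑ i ∈ s, v i j)).det
      = ∑ i ∈ s, (M.updateCol k (v i)).det := by
  classical
  induction s using Finset.induction_on with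
  | empty =>
      simp only [Finset.sum_empty]
      exact Matrix.det_eq_zero_of_column_eq_zero k (fun i => by simp [Matrix.updateCol_apply])
  | insert _ _ hnot ih =>
      rename_i a s'
      simp only [Finset.sum_insert hnot]
      have : (M.updateCol k fun j => v a j + ∑ i ∈ s', v i j)
          = M.updateCol k (v a + fun j => ∑ i ∈ s', v i j) := rfl
      rw [this, Matrix.det_updateCol_add, ih]

lemma rpow_base_bound {t x c : ℝ} (ht : 0 < t) (hx : 1 ≤ x) :
    (x + t) ^ c ≤ (1 + t) ^ |c| * x ^ |c| := by
  have hx0 : (0:ℝ) < x := lt_of_lt_of_le one_pos hx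
  rcases le_or_gt 0 c with hc | hc
  · rw [abs_of_nonneg hc]
    calc (x + t) ^ c ≤ ((1 + t) * x) ^ c := by
          apply Real.rpow_le_rpow (by positivity) _ hc
          nlinarith
      _ = (1 + t) ^ c * x ^ c := Real.mul_rpow (by positivity) hx0.le
  · have h1 : (x + t) ^ c ≤ x ^ c :=
      Real.rpow_le_rpow_of_nonpos hx0 (by linarith) hc.le
    have h2 : x ^ c ≤ 1 := by
      calc x ^ c ≤ x ^ (0:ℝ) := Real.rpow_le_rpow_of_exponent_le hx hc.le
        _ = 1 := Real.rpow_zero x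
    have h3 : (1:ℝ) ≤ (1 + t) ^ |c| * x ^ |c| := by
      have := Real.one_le_rpow (by linarith : (1:ℝ) ≤ 1 + t) (abs_nonneg c)
      have := Real.one_le_rpow hx (abs_nonneg c)
      nlinarith
    linarith

lemma rpow_base_bound_small {t x c : ℝ} (ht : 0 < t) (hx0 : 0 < x) (hx : x ≤ 1) :
    (x + t) ^ c ≤ max (t ^ c) ((1 + t) ^ c) := by
  rcases le_or_gt 0 c with hc | hc
  · exact le_max_of_le_right (Real.rpow_le_rpow (by positivity) (by linarith) hc)
  · exact le_max_of_le_left (Real.rpow_le_rpow_of_nonpos ht (by linarith) hc.le)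

lemma continuousOn_weight {α c t : ℝ} (ht : 0 < t) (m : ℕ) :
    ContinuousOn (fun x : ℝ => x ^ m * ((x + t) ^ c * x ^ α * Real.exp (-x))) (Ioi (0:ℝ)) := by
  apply ContinuousOn.mul (continuousOn_pow m)
  apply ContinuousOn.mul
  apply ContinuousOn.mul
  · exact ContinuousOn.rpow_const (by fun_prop) (fun x hx => Or.inl (by simp at hx ⊢; linarith))
  · exact ContinuousOn.rpow_const continuousOn_id (fun x hx => Or.inl (ne_of_gt hx))
  · fun_prop

lemma integrableOn_weight {α c t : ℝ} (hα : 0 < α) (ht : 0 < t) (m : ℕ) :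
    IntegrableOn (fun x : ℝ => x ^ m * ((x + t) ^ c * x ^ α * Real.exp (-x))) (Ioi (0:ℝ)) := by
  set f := fun x : ℝ => x ^ m * ((x + t) ^ c * x ^ α * Real.exp (-x)) with hf
  have hmeas : ∀ s ⊆ Ioi (0:ℝ), MeasurableSet s → AEStronglyMeasurable f (volume.restrict s) :=
    fun s hs hsm => ((continuousOn_weight ht m).mono hs).aestronglyMeasurable hsm
  have hnn : ∀ x ∈ Ioi (0:ℝ), 0 ≤ f x := by
    intro x hx; rw [Set.mem_Ioi] at hx
    have : (0:ℝ) < x + t := by linarith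
    positivity
  have h1 : IntegrableOn f (Ioc (0:ℝ) 1) := by
    have hbdd : ∀ᵐ x ∂(volume.restrict (Ioc (0:ℝ) 1)),
        ‖f x‖ ≤ max (t ^ c) ((1 + t) ^ c) := by
      filter_upwards [ae_restrict_mem measurableSet_Ioc] with x hx
      obtain ⟨hx0, hx1⟩ := hx
      rw [Real.norm_eq_abs, abs_of_nonneg (hnn x hx0)]
      have e1 : x ^ m ≤ 1 := pow_le_one₀ hx0.le hx1
      have e2 : x ^ α ≤ 1 := Real.rpow_le_one hx0.le hx1 hα.le
      have e3 : Real.exp (-x) ≤ 1 := Real.exp_le_one_iff.mpr (by linarith)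
      have e4 : (x + t) ^ c ≤ max (t ^ c) ((1 + t) ^ c) := rpow_base_bound_small ht hx0 hx1
      have p1 : (0:ℝ) ≤ x ^ m := by positivity
      have p2 : (0:ℝ) < (x + t) ^ c := Real.rpow_pos_of_pos (by linarith) c
      have p3 : (0:ℝ) ≤ x ^ α := by positivity
      have p4 : (0:ℝ) ≤ Real.exp (-x) := (Real.exp_pos _).le
      calc x ^ m * ((x + t) ^ c * x ^ α * Real.exp (-x))
          ≤ 1 * ((x + t) ^ c * 1 * 1) := by
            apply mul_le_mul e1 _ (by positivity) zero_le_one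
            apply mul_le_mul _ e3 p4 (by positivity)
            exact mul_le_mul le_rfl e2 p3 p2.le
        _ = (x + t) ^ c := by ring
        _ ≤ max (t ^ c) ((1 + t) ^ c) := e4
    exact Integrable.mono' (integrable_const _)
      (hmeas _ Ioc_subset_Ioi_self measurableSet_Ioc) hbdd
  have h2 : IntegrableOn f (Ioi (1:ℝ)) := by
    have hs : (0:ℝ) < ↑m + α + |c| + 1 := by positivity
    have hint : IntegrableOn
        (fun x : ℝ => (1 + t) ^ |c| * (Real.exp (-x) * x ^ (↑m + α + |c| + 1 - 1))) (Ioi (1:ℝ)) :=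
      ((Real.GammaIntegral_convergent hs).mono_set
        (Ioi_subset_Ioi zero_le_one)).const_mul _
    apply Integrable.mono' hint (hmeas _ (Ioi_subset_Ioi zero_le_one) measurableSet_Ioi)
    filter_upwards [ae_restrict_mem measurableSet_Ioi] with x hx
    rw [Set.mem_Ioi] at hx
    have hx0 : (0:ℝ) < x := lt_trans one_pos hx
    rw [Real.norm_eq_abs, abs_of_nonneg (hnn x hx0)]
    have e4 : (x + t) ^ c ≤ (1 + t) ^ |c| * x ^ |c| := rpow_base_bound ht hx.le
    have key : x ^ m * (x ^ |c| * x ^ α) = x ^ (↑m + α + |c| + 1 - 1) := by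
      rw [← Real.rpow_natCast x m, ← Real.rpow_add hx0, ← Real.rpow_add hx0]
      ring_nf
    calc x ^ m * ((x + t) ^ c * x ^ α * Real.exp (-x))
        ≤ x ^ m * ((1 + t) ^ |c| * x ^ |c| * x ^ α * Real.exp (-x)) := by
          apply mul_le_mul_of_nonneg_left _ (by positivity)
          apply mul_le_mul_of_nonneg_right _ (Real.exp_pos _).le
          exact mul_le_mul_of_nonneg_right e4 (by positivity)
      _ = (1 + t) ^ |c| * (Real.exp (-x) * (x ^ m * (x ^ |c| * x ^ α))) := by ring
      _ = (1 + t) ^ |c| * (Real.exp (-x) * x ^ (↑m + α + |c| + 1 - 1)) := by rw [key]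
  have : Ioi (0:ℝ) = Ioc (0:ℝ) 1 ∪ Ioi (1:ℝ) := (Ioc_union_Ioi_eq_Ioi zero_le_one).symm
  rw [this]
  exact h1.union h2

noncomputable def muF (α lam : ℝ) (m : ℕ) (t : ℝ) : ℝ :=
  ∫ x in Ioi (0:ℝ), x ^ m * ((x + t) ^ lam * x ^ α * Real.exp (-x))

noncomputable def nuF (α lam : ℝ) (m : ℕ) (t : ℝ) : ℝ :=
  ∫ x in Ioi (0:ℝ), x ^ m * ((x + t) ^ (lam - 1) * x ^ α * Real.exp (-x))

section analytic
variable {α lam t : ℝ}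

/-- differentiation under the integral sign -/
lemma hasDerivAt_muF_nu (hα : 0 < α) (ht : 0 < t) (m : ℕ) :
    HasDerivAt (muF α lam m) (lam * nuF α lam m t) t := by
  have h2t : (0:ℝ) < t / 2 := by linarith
  set F : ℝ → ℝ → ℝ := fun u x => x ^ m * ((x + u) ^ lam * x ^ α * Real.exp (-x)) with hF
  set F' : ℝ → ℝ → ℝ :=
    fun u x => lam * (x ^ m * ((x + u) ^ (lam - 1) * x ^ α * Real.exp (-x))) with hF'
  set bound : ℝ → ℝ := fun x =>
    |lam| * (x ^ m * ((x + t/2) ^ (lam - 1) * x ^ α * Real.exp (-x)))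
      + |lam| * (x ^ m * ((x + 2*t) ^ (lam - 1) * x ^ α * Real.exp (-x))) with hbound
  have key := hasDerivAt_integral_of_dominated_loc_of_deriv_le (μ := volume.restrict (Ioi 0))
    (F := F) (F' := F') (x₀ := t) (s := Metric.ball t (t/2)) (bound := bound) (Metric.ball_mem_nhds t h2t) ?_ ?_ ?_ ?_ ?_ ?_
  · have : (∫ x in Ioi (0:ℝ), F' t x) = lam * nuF α lam m t := by
      rw [hF', nuF]
      exact integral_const_mul lam _
    rw [this] at key
    exact key.2
  · filter_upwards [Ioi_mem_nhds (half_lt_self ht)] with u hu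
    rw [Set.mem_Ioi] at hu
    exact (continuousOn_weight (lt_trans h2t hu) m).aestronglyMeasurable measurableSet_Ioi
  · exact integrableOn_weight hα ht m
  · exact ((continuousOn_weight ht m (c := lam - 1)).aestronglyMeasurable
      measurableSet_Ioi).const_mul lam
  · filter_upwards [ae_restrict_mem measurableSet_Ioi] with x hx u hu
    rw [Set.mem_Ioi] at hx
    rw [Metric.mem_ball, Real.dist_eq, abs_lt] at hu
    have hu1 : t/2 < u := by linarith
    have hu2 : u < 2*t := by linarith
    have hxu : (0:ℝ) < x + u := by linarith
    have hrb : (x + u) ^ (lam - 1)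
        ≤ (x + t/2) ^ (lam - 1) + (x + 2*t) ^ (lam - 1) := by
      rcases le_or_gt 0 (lam - 1) with hc | hc
      · have : (x + u) ^ (lam - 1) ≤ (x + 2*t) ^ (lam - 1) :=
          Real.rpow_le_rpow (by linarith) (by linarith) hc
        have hpos : (0:ℝ) < (x + t/2) ^ (lam - 1) :=
          Real.rpow_pos_of_pos (by linarith) _
        linarith
      · have : (x + u) ^ (lam - 1) ≤ (x + t/2) ^ (lam - 1) :=
          Real.rpow_le_rpow_of_nonpos (by linarith) (by linarith) hc.le
        have hpos : (0:ℝ) < (x + 2*t) ^ (lam - 1) :=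
          Real.rpow_pos_of_pos (by linarith) _
        linarith
    rw [hF', Real.norm_eq_abs, hbound]
    have h1 : |lam * (x ^ m * ((x + u) ^ (lam - 1) * x ^ α * Real.exp (-x)))|
        = |lam| * (x ^ m * ((x + u) ^ (lam - 1) * x ^ α * Real.exp (-x))) := by
      rw [abs_mul]
      congr 1
      apply abs_of_nonneg
      have : (0:ℝ) < (x + u) ^ (lam - 1) := Real.rpow_pos_of_pos hxu _
      positivity
    rw [h1]
    have hnn : (0:ℝ) ≤ x ^ m * (x ^ α * Real.exp (-x)) := by positivity
    calc |lam| * (x ^ m * ((x + u) ^ (lam - 1) * x ^ α * Real.exp (-x)))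
        ≤ |lam| * (x ^ m * (((x + t/2) ^ (lam - 1) + (x + 2*t) ^ (lam - 1)) * x ^ α
            * Real.exp (-x))) := by
          apply mul_le_mul_of_nonneg_left _ (abs_nonneg lam)
          have := mul_le_mul_of_nonneg_right
            (mul_le_mul_of_nonneg_right hrb (by positivity : (0:ℝ) ≤ x ^ α))
            ((Real.exp_pos (-x)).le)
          nlinarith [pow_nonneg hx.le m, this]
      _ = |lam| * (x ^ m * ((x + t/2) ^ (lam - 1) * x ^ α * Real.exp (-x)))
            + |lam| * (x ^ m * ((x + 2*t) ^ (lam - 1) * x ^ α * Real.exp (-x))) := by ring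
  · exact ((integrableOn_weight hα h2t m).const_mul _).add
      ((integrableOn_weight hα (by linarith : (0:ℝ) < 2*t) m).const_mul _)
  · filter_upwards [ae_restrict_mem measurableSet_Ioi] with x hx u hu
    rw [Set.mem_Ioi] at hx
    rw [Metric.mem_ball, Real.dist_eq, abs_lt] at hu
    have hxu : (0:ℝ) < x + u := by linarith
    have h₁ : HasDerivAt (fun u : ℝ => x + u) 1 u := by
      simpa using (hasDerivAt_id u).const_add x
    have h₂ := h₁.rpow_const (p := lam) (Or.inl hxu.ne')
    have h₃ := (h₂.mul_const (x ^ α * Real.exp (-x))).const_mul (x ^ m : ℝ)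
    have hfun : (fun u : ℝ => F u x)
        = fun u : ℝ => (x:ℝ) ^ m * ((x + u) ^ lam * (x ^ α * Real.exp (-x))) := by
      funext u; rw [hF]; ring
    rw [hfun]
    convert h₃ using 1
    · rfl
    rw [hF']; ring

/-- integration by parts -/
lemma ibp_muF (hα : 0 < α) (ht : 0 < t) (m : ℕ) :
    lam * nuF α lam (m + 1) t = muF α lam (m + 1) t - (↑m + α + 1) * muF α lam m t := by
  set e : ℝ := α + ↑m + 1 with he
  have hepos : (0:ℝ) < e := by positivity
  set g : ℝ → ℝ := fun x => x ^ e * ((x + t) ^ lam * Real.exp (-x)) with hg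
  set G' : ℝ → ℝ := fun x =>
    (↑m + α + 1) * (x ^ m * ((x + t) ^ lam * x ^ α * Real.exp (-x)))
      + lam * (x ^ (m+1) * ((x + t) ^ (lam - 1) * x ^ α * Real.exp (-x)))
      - x ^ (m+1) * ((x + t) ^ lam * x ^ α * Real.exp (-x)) with hG'
  have hderiv : ∀ x ∈ Ioi (0:ℝ), HasDerivAt g (G' x) x := by
    intro x hx
    rw [Set.mem_Ioi] at hx
    have hxt : (0:ℝ) < x + t := by linarith
    have h₁ : HasDerivAt (fun x : ℝ => x ^ e) (e * x ^ (e - 1)) x :=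
      Real.hasDerivAt_rpow_const (Or.inl hx.ne')
    have h₂ := (((hasDerivAt_id x).add_const t).rpow_const (p := lam) (Or.inl hxt.ne'))
    have h₃ : HasDerivAt (fun x : ℝ => Real.exp (-x)) (-Real.exp (-x)) x := by
      simpa using ((hasDerivAt_id x).neg).exp
    have h₄ := h₁.fun_mul (h₂.fun_mul h₃)
    convert h₄ using 1
    · rfl
    · rfl
    · rfl
    have e1 : x ^ (e - 1) = x ^ m * x ^ α := by
      have : e - 1 = (m:ℝ) + α := by rw [he]; ring
      rw [this, Real.rpow_add hx, Real.rpow_natCast]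
    have e2 : x ^ e = x ^ (m+1) * x ^ α := by
      have : e = ((m+1 : ℕ):ℝ) + α := by rw [he]; push_cast; ring
      rw [this, Real.rpow_add hx, Real.rpow_natCast]
    rw [hG', e1, e2]; simp only [id_eq]; ring
  have hint : IntegrableOn G' (Ioi (0:ℝ)) := by
    exact (((integrableOn_weight hα ht m).const_mul _).add
      ((integrableOn_weight hα ht (m+1)).const_mul _)).sub (integrableOn_weight hα ht (m+1))
  have hcont : ContinuousWithinAt g (Ici (0:ℝ)) 0 := by
    apply ContinuousAt.continuousWithinAt
    apply ContinuousAt.mul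
    · exact Real.continuousAt_rpow_const 0 e (Or.inr hepos.le)
    · apply ContinuousAt.mul
      · exact (continuousAt_id.add continuousAt_const).rpow_const
          (Or.inl (by simpa using ht.ne'))
      · exact (continuousAt_id.neg).rexp
  have htend : Tendsto g atTop (nhds 0) := by
    have hb := (tendsto_rpow_mul_exp_neg_mul_atTop_nhds_zero (e + |lam|) 1 one_pos).const_mul
      ((1 + t) ^ |lam|)
    rw [mul_zero] at hb
    apply squeeze_zero' ?_ ?_ hb
    · filter_upwards [eventually_ge_atTop (1:ℝ)] with x hx
      have hx0 : (0:ℝ) < x := lt_of_lt_of_le one_pos hx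
      have : (0:ℝ) < (x+t)^lam := Real.rpow_pos_of_pos (by linarith) _
      rw [hg]; positivity
    · filter_upwards [eventually_ge_atTop (1:ℝ)] with x hx
      have hx0 : (0:ℝ) < x := lt_of_lt_of_le one_pos hx
      have hrb : (x + t) ^ lam ≤ (1 + t) ^ |lam| * x ^ |lam| := rpow_base_bound ht hx
      have hxe : (0:ℝ) < x ^ e := Real.rpow_pos_of_pos hx0 _
      calc g x ≤ x ^ e * (((1 + t) ^ |lam| * x ^ |lam|) * Real.exp (-x)) := by
            rw [hg]
            apply mul_le_mul_of_nonneg_left _ hxe.le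
            exact mul_le_mul_of_nonneg_right hrb (Real.exp_pos _).le
        _ = (1 + t) ^ |lam| * (x ^ (e + |lam|) * Real.exp (-1 * x)) := by
            rw [Real.rpow_add hx0 e |lam|, neg_one_mul]; ring
  have hFTC := integral_Ioi_of_hasDerivAt_of_tendsto hcont hderiv hint htend
  have hg0 : g 0 = 0 := by
    rw [hg]; simp [Real.zero_rpow hepos.ne']
  rw [hg0, sub_zero] at hFTC
  -- hFTC : ∫ x in Ioi 0, G' x = 0
  have i1 := integrableOn_weight (α := α) (c := lam) (t := t) hα ht m
  have i2 := integrableOn_weight (α := α) (c := lam - 1) (t := t) hα ht (m+1)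
  have i3 := integrableOn_weight (α := α) (c := lam) (t := t) hα ht (m+1)
  have hsplit : (∫ x in Ioi (0:ℝ), G' x)
      = (↑m + α + 1) * muF α lam m t + lam * nuF α lam (m+1) t - muF α lam (m+1) t := by
    have step1 : (∫ x in Ioi (0:ℝ), G' x)
        = (∫ x in Ioi (0:ℝ), ((↑m + α + 1) * (x ^ m * ((x + t) ^ lam * x ^ α * Real.exp (-x)))
            + lam * (x ^ (m+1) * ((x + t) ^ (lam - 1) * x ^ α * Real.exp (-x)))))
          - ∫ x in Ioi (0:ℝ), x ^ (m+1) * ((x + t) ^ lam * x ^ α * Real.exp (-x)) :=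
      integral_sub ((i1.const_mul _).add (i2.const_mul _)) i3
    have step2 : (∫ x in Ioi (0:ℝ),
          ((↑m + α + 1) * (x ^ m * ((x + t) ^ lam * x ^ α * Real.exp (-x)))
            + lam * (x ^ (m+1) * ((x + t) ^ (lam - 1) * x ^ α * Real.exp (-x)))))
        = (∫ x in Ioi (0:ℝ), (↑m + α + 1) * (x ^ m * ((x + t) ^ lam * x ^ α * Real.exp (-x))))
          + ∫ x in Ioi (0:ℝ), lam * (x ^ (m+1) * ((x + t) ^ (lam - 1) * x ^ α * Real.exp (-x))) :=
      integral_add (i1.const_mul _) (i2.const_mul _)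
    rw [step1, step2, integral_const_mul, integral_const_mul]
    rw [muF, muF, nuF]
  rw [hsplit] at hFTC
  linarith

/-- splitting the weight -/
lemma muF_split (hα : 0 < α) (ht : 0 < t) (m : ℕ) :
    muF α lam m t = nuF α lam (m+1) t + t * nuF α lam m t := by
  have hcongr : ∀ x ∈ Ioi (0:ℝ),
      x ^ m * ((x + t) ^ lam * x ^ α * Real.exp (-x))
        = x ^ (m+1) * ((x + t) ^ (lam - 1) * x ^ α * Real.exp (-x))
          + t * (x ^ m * ((x + t) ^ (lam - 1) * x ^ α * Real.exp (-x))) := by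
    intro x hx
    rw [Set.mem_Ioi] at hx
    have hxt : (0:ℝ) < x + t := by linarith
    have : (x + t) ^ lam = (x + t) ^ (lam - 1) * (x + t) := by
      rw [← Real.rpow_add_one hxt.ne' (lam - 1)]; ring_nf
    rw [this, pow_succ]; ring
  have i1 := integrableOn_weight (α := α) (c := lam - 1) (t := t) hα ht m
  have i2 := integrableOn_weight (α := α) (c := lam - 1) (t := t) hα ht (m+1)
  have step : (∫ x in Ioi (0:ℝ),
        (x ^ (m+1) * ((x + t) ^ (lam - 1) * x ^ α * Real.exp (-x))
          + t * (x ^ m * ((x + t) ^ (lam - 1) * x ^ α * Real.exp (-x)))))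
      = (∫ x in Ioi (0:ℝ), x ^ (m+1) * ((x + t) ^ (lam - 1) * x ^ α * Real.exp (-x)))
        + ∫ x in Ioi (0:ℝ), t * (x ^ m * ((x + t) ^ (lam - 1) * x ^ α * Real.exp (-x))) :=
    integral_add i2 (i1.const_mul t)
  rw [muF]
  rw [setIntegral_congr_fun measurableSet_Ioi hcongr]
  rw [step, integral_const_mul, nuF, nuF]

/-- main derivative formula for moments -/
lemma hasDerivAt_muF (hα : 0 < α) (ht : 0 < t) (m : ℕ) :
    HasDerivAt (muF α lam m)
      (((lam + α + 1 + ↑m) * muF α lam m t - muF α lam (m+1) t) / t) t := by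
  have h1 := hasDerivAt_muF_nu (lam := lam) hα ht m
  have h2 := ibp_muF (lam := lam) hα ht m
  have h3 := muF_split (lam := lam) hα ht m
  have : lam * nuF α lam m t
      = ((lam + α + 1 + ↑m) * muF α lam m t - muF α lam (m+1) t) / t := by
    rw [eq_div_iff ht.ne']
    have : lam * nuF α lam m t * t = lam * (muF α lam m t - nuF α lam (m+1) t) := by
      rw [h3]; ring
    rw [this, mul_sub, h2]; ring
  rwa [this] at h1
end analytic

noncomputable def McM (α lam : ℝ) (n : ℕ) (c : Fin n → ℕ) (t : ℝ) :
    Matrix (Fin n) (Fin n) ℝ := fun j k => muF α lam ((j : ℕ) + c k) t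

lemma updateColumn_McM {α lam t : ℝ} {n : ℕ} (c : Fin n → ℕ) (k : Fin n) (m : ℕ) :
    (McM α lam n c t).updateCol k (fun j => muF α lam ((j : ℕ) + m) t)
      = McM α lam n (Function.update c k m) t := by
  funext i j
  by_cases hj : j = k
  · subst hj; simp [Matrix.updateCol_apply, McM, Function.update]
  · simp [Matrix.updateCol_apply, hj, McM, Function.update]

lemma det_McM_dup {α lam t : ℝ} {n : ℕ} {c : Fin n → ℕ} {k1 k2 : Fin n}
    (hne : k1 ≠ k2) (hc : c k1 = c k2) : (McM α lam n c t).det = 0 :=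
  Matrix.det_zero_of_column_eq hne (fun j => by simp [McM, hc])

lemma det_McM_comp_perm {α lam t : ℝ} {n : ℕ} (c : Fin n → ℕ) (σ : Equiv.Perm (Fin n)) :
    (McM α lam n (c ∘ ⇑σ) t).det = (Equiv.Perm.sign σ : ℝ) * (McM α lam n c t).det := by
  have : McM α lam n (c ∘ ⇑σ) t = (McM α lam n c t).submatrix id ⇑σ := rfl
  rw [this, Matrix.det_permute']

lemma hasDerivAt_det_McM {α lam t : ℝ} {n : ℕ} (hα : 0 < α) (ht : 0 < t) (c : Fin n → ℕ) :
    HasDerivAt (fun u => (McM α lam n c u).det)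
      (((∑ k : Fin n, (lam + α + 1 + (c k : ℝ)) + ∑ j : Fin n, ((j : ℕ) : ℝ))
          * (McM α lam n c t).det
        - ∑ k : Fin n, (McM α lam n (Function.update c k (c k + 1)) t).det) / t) t := by
  have hder := hasDerivAt_det_aux (A := fun u => McM α lam n c u)
    (A' := fun j k => ((lam + α + 1 + (((j : ℕ) + c k : ℕ) : ℝ)) * muF α lam ((j : ℕ) + c k) t
        - muF α lam ((j : ℕ) + c k + 1) t) / t) (t := t)
    (fun j k => hasDerivAt_muF hα ht ((j : ℕ) + c k))
  convert hder using 1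
  set M := McM α lam n c t with hM
  have hcolsum : ∀ k : Fin n,
      ((M.updateCol k (fun j => ((lam + α + 1 + (((j : ℕ) + c k : ℕ) : ℝ))
          * muF α lam ((j : ℕ) + c k) t - muF α lam ((j : ℕ) + c k + 1) t) / t)).det)
      = (1/t) * ((lam + α + 1 + (c k : ℝ)) * M.det
          + ((M.updateCol k (fun j => ((j : ℕ) : ℝ) * M j k)).det
            + (-1) * (McM α lam n (Function.update c k (c k + 1)) t).det)) := by
    intro k
    have hcol : (fun j : Fin n => ((lam + α + 1 + (((j : ℕ) + c k : ℕ) : ℝ))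
          * muF α lam ((j : ℕ) + c k) t - muF α lam ((j : ℕ) + c k + 1) t) / t)
        = (1/t) • ((lam + α + 1 + (c k : ℝ)) • (fun j : Fin n => M j k)
            + ((fun j : Fin n => ((j : ℕ) : ℝ) * M j k)
              + (-1 : ℝ) • (fun j : Fin n => muF α lam ((j : ℕ) + (c k + 1)) t))) := by
      funext j
      simp only [Pi.smul_apply, Pi.add_apply, smul_eq_mul, hM, McM]
      simp only [Nat.add_assoc]
      push_cast
      ring
    rw [hcol, Matrix.det_updateCol_smul, Matrix.det_updateCol_add,
        Matrix.det_updateCol_add, Matrix.det_updateCol_smul,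
        Matrix.det_updateCol_smul, Matrix.updateCol_eq_self]
    rw [hM, updateColumn_McM]
  have key : ∀ (A B C : Fin n → ℝ), (∑ i, (A i + (B i + C i)))
      = (∑ i, A i) + ((∑ i, B i) + (∑ i, C i)) := by
    intro A B C
    rw [← Finset.sum_add_distrib, ← Finset.sum_add_distrib]
  have hsplit2 : ∀ k : Fin n,
      1 / t * ((lam + α + 1 + (c k : ℝ)) * M.det
          + ((M.updateCol k fun j => ((j : ℕ) : ℝ) * M j k).det
            + -1 * (McM α lam n (Function.update c k (c k + 1)) t).det))
      = 1 / t * ((lam + α + 1 + (c k : ℝ)) * M.det)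
          + (1 / t * (M.updateCol k fun j => ((j : ℕ) : ℝ) * M j k).det
            + (-1 / t) * (McM α lam n (Function.update c k (c k + 1)) t).det) := by
    intro k; ring
  rw [Finset.sum_congr rfl (fun k _ => hcolsum k),
      Finset.sum_congr rfl (fun k _ => hsplit2 k), key,
      ← Finset.mul_sum, ← Finset.mul_sum, ← Finset.mul_sum, ← Finset.sum_mul,
      sum_det_updateColumn_rowscale M (fun j => ((j : ℕ) : ℝ))]
  ring

lemma integrableOn_polyweight {α lam t : ℝ} (hα : 0 < α) (ht : 0 < t) (q : Polynomial ℝ) :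
    IntegrableOn (fun x => q.eval x * ((x + t) ^ lam * x ^ α * Real.exp (-x))) (Ioi (0:ℝ)) := by
  have hfun : (fun x => q.eval x * ((x + t) ^ lam * x ^ α * Real.exp (-x)))
      = fun x => ∑ i ∈ Finset.range (q.natDegree + 1),
          q.coeff i * (x ^ i * ((x + t) ^ lam * x ^ α * Real.exp (-x))) := by
    funext x
    rw [Polynomial.eval_eq_sum_range, Finset.sum_mul]
    exact Finset.sum_congr rfl fun i _ => by ring
  rw [hfun]
  exact integrable_finset_sum _ fun i _ => (integrableOn_weight hα ht i).const_mul _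

lemma orth_poly {α lam t : ℝ} (hα : 0 < α) (ht : 0 < t)
    (p : ℕ → Polynomial ℝ) (h : ℕ → ℝ)
    (hmonic : ∀ k, (p k).Monic) (hdeg : ∀ k, (p k).natDegree = k)
    (horth : ∀ j k, (∫ x in Ioi (0:ℝ),
        (p j).eval x * (p k).eval x * ((x + t) ^ lam * x ^ α * Real.exp (-x)))
      = if j = k then h j else 0) :
    ∀ m d (q : Polynomial ℝ), q.natDegree ≤ d → d < m →
      (∫ x in Ioi (0:ℝ),
        (p m).eval x * q.eval x * ((x + t) ^ lam * x ^ α * Real.exp (-x))) = 0 := by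
  have hPQ : ∀ u v : Polynomial ℝ, IntegrableOn
      (fun x => u.eval x * v.eval x * ((x + t) ^ lam * x ^ α * Real.exp (-x))) (Ioi (0:ℝ)) := by
    intro u v
    have : (fun x => u.eval x * v.eval x * ((x + t) ^ lam * x ^ α * Real.exp (-x)))
        = fun x => (u * v).eval x * ((x + t) ^ lam * x ^ α * Real.exp (-x)) := by
      funext x; rw [Polynomial.eval_mul]
    rw [this]; exact integrableOn_polyweight hα ht _
  intro m d
  induction d with
  | zero =>
      intro q hq hdm
      have hq' : q = Polynomial.C (q.coeff 0) := Polynomial.eq_C_of_natDegree_le_zero hq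
      have hp0 : p 0 = 1 := by
        have h0 : p 0 = Polynomial.C ((p 0).coeff 0) :=
          Polynomial.eq_C_of_natDegree_le_zero (le_of_eq (hdeg 0))
        have h1 : (p 0).coeff 0 = 1 := by
          have := (hmonic 0).coeff_natDegree
          rwa [hdeg 0] at this
        rw [h0, h1, map_one]
      have hfun : (fun x => (p m).eval x * q.eval x * ((x + t) ^ lam * x ^ α * Real.exp (-x)))
          = fun x => q.coeff 0 *
              ((p m).eval x * (p 0).eval x * ((x + t) ^ lam * x ^ α * Real.exp (-x))) := by
        funext x
        conv_lhs => rw [hq']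
        rw [hp0]
        simp [Polynomial.eval_C]
        ring
      rw [hfun, integral_const_mul, horth m 0, if_neg (by omega), mul_zero]
  | succ d ih =>
      intro q hq hdm
      set cl := q.coeff (d+1) with hcl
      set r := q - Polynomial.C cl * p (d+1) with hr
      have hrdeg : r.natDegree ≤ d := by
        rw [Polynomial.natDegree_le_iff_coeff_eq_zero]
        intro N hN
        rcases Nat.lt_or_ge N (d+2) with hN2 | hN2
        · have hNd : N = d + 1 := by omega
          subst hNd
          have hcoef : (p (d+1)).coeff (d+1) = 1 := by
            have := (hmonic (d+1)).coeff_natDegree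
            rwa [hdeg (d+1)] at this
          simp [hr, Polynomial.coeff_sub, Polynomial.coeff_C_mul, hcoef, hcl]
        · have h1 : q.coeff N = 0 :=
            Polynomial.coeff_eq_zero_of_natDegree_lt (by omega)
          have h2 : (p (d+1)).coeff N = 0 :=
            Polynomial.coeff_eq_zero_of_natDegree_lt (by rw [hdeg (d+1)]; omega)
          simp [hr, Polynomial.coeff_sub, Polynomial.coeff_C_mul, h1, h2]
      have hq' : q = Polynomial.C cl * p (d+1) + r := by rw [hr]; ring
      have hfun : (fun x => (p m).eval x * q.eval x * ((x + t) ^ lam * x ^ α * Real.exp (-x)))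
          = fun x => cl * ((p m).eval x * (p (d+1)).eval x
                * ((x + t) ^ lam * x ^ α * Real.exp (-x)))
              + (p m).eval x * r.eval x * ((x + t) ^ lam * x ^ α * Real.exp (-x)) := by
        funext x
        conv_lhs => rw [hq']
        simp only [Polynomial.eval_add, Polynomial.eval_mul, Polynomial.eval_C]
        ring
      rw [hfun]
      rw [integral_add ((hPQ (p m) (p (d+1))).const_mul cl) (hPQ (p m) r)]
      rw [integral_const_mul, horth m (d+1), if_neg (by omega), mul_zero,
        ih r hrdeg (by omega), zero_add]

lemma moment_column_relation {α lam t : ℝ} (hα : 0 < α) (ht : 0 < t)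
    (P : Polynomial ℝ) (m : ℕ) (hPdeg : P.natDegree = m) (hPmonic : P.Monic)
    (hPorth : ∀ j : ℕ, j < m → (∫ x in Ioi (0:ℝ),
        P.eval x * x ^ j * ((x + t) ^ lam * x ^ α * Real.exp (-x))) = 0) :
    ∀ j : ℕ, j < m → muF α lam (j + m) t
      = ∑ i ∈ Finset.range m, (-(P.coeff i)) * muF α lam (j + i) t := by
  intro j hj
  have hfun : (fun x => P.eval x * x ^ j * ((x + t) ^ lam * x ^ α * Real.exp (-x)))
      = fun x => ∑ i ∈ Finset.range (m + 1),
          P.coeff i * (x ^ (j + i) * ((x + t) ^ lam * x ^ α * Real.exp (-x))) := by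
    funext x
    rw [Polynomial.eval_eq_sum_range, hPdeg, Finset.sum_mul, Finset.sum_mul]
    exact Finset.sum_congr rfl fun i _ => by rw [pow_add]; ring
  have hzero := hPorth j hj
  rw [hfun] at hzero
  rw [integral_finset_sum _ (fun i _ =>
    ((integrableOn_weight hα ht (j + i)).const_mul (P.coeff i)))] at hzero
  have hsum : ∀ i ∈ Finset.range (m+1),
      (∫ x in Ioi (0:ℝ), P.coeff i * (x ^ (j+i) * ((x + t) ^ lam * x ^ α * Real.exp (-x))))
        = P.coeff i * muF α lam (j + i) t := by
    intro i _
    rw [integral_const_mul]; rfl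
  rw [Finset.sum_congr rfl hsum] at hzero
  rw [Finset.sum_range_succ] at hzero
  have hlead : P.coeff m = 1 := by
    have := hPmonic.coeff_natDegree; rwa [hPdeg] at this
  rw [hlead, one_mul] at hzero
  have : ∑ i ∈ Finset.range m, (-(P.coeff i)) * muF α lam (j + i) t
      = -∑ i ∈ Finset.range m, P.coeff i * muF α lam (j + i) t := by
    rw [← Finset.sum_neg_distrib]
    exact Finset.sum_congr rfl fun i _ => by ring
  rw [this]; linarith

lemma det_McM_update_expand {α lam t : ℝ} {n : ℕ} (c : Fin n → ℕ) (k : Fin n)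
    (m M' : ℕ) (coefs : ℕ → ℝ)
    (hcol : ∀ j : Fin n, muF α lam ((j : ℕ) + m) t
      = ∑ i ∈ Finset.range M', coefs i * muF α lam ((j : ℕ) + i) t) :
    (McM α lam n (Function.update c k m) t).det
      = ∑ i ∈ Finset.range M', coefs i * (McM α lam n (Function.update c k i) t).det := by
  rw [← updateColumn_McM]
  have hc : (fun j : Fin n => muF α lam ((j : ℕ) + m) t)
      = fun j : Fin n => ∑ i ∈ Finset.range M', coefs i * muF α lam ((j : ℕ) + i) t := by
    funext j; exact hcol j
  rw [hc, det_updateColumn_finsum]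
  refine Finset.sum_congr rfl fun i _ => ?_
  have hsm : (fun j : Fin n => coefs i * muF α lam ((j : ℕ) + i) t)
      = coefs i • (fun j : Fin n => muF α lam ((j : ℕ) + i) t) := rfl
  rw [hsm, Matrix.det_updateCol_smul, updateColumn_McM]

/-- Chen–McKay: with `H_n(t) = t (d/dt) log D_n(t;α,λ)`, the recurrence
coefficient `β_n(t)` of the monic orthogonal polynomials for the perturbed Laguerre
weight satisfies `β_n(t) = n(n + α + λ) + t H_n′(t) − H_n(t)` (whenever `H_n` is
differentiable at `t`), on an open interval of `(0,∞)` where `D_n` is differentiable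
and positive. -/
theorem recurrence_coefficient_beta_eq
    (n : ℕ) (hn : 1 ≤ n) (α lam : ℝ) (hα : 0 < α) (hsum : α + lam + 1 > 0)
    (I : Set ℝ) (hIopen : IsOpen I) (hIsub : I ⊆ Set.Ioi (0 : ℝ))
    (D : ℝ → ℝ)
    (hD : ∀ t ∈ I, D t = Matrix.det (fun j k : Fin n =>
        ∫ x in Set.Ioi (0 : ℝ),
          x ^ ((j : ℕ) + (k : ℕ)) * ((x + t) ^ lam * x ^ α * Real.exp (-x))))
    (hDdiff : ∀ t ∈ I, DifferentiableAt ℝ D t)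
    (hDpos : ∀ t ∈ I, 0 < D t)
    (p : ℕ → ℝ → Polynomial ℝ) (h : ℕ → ℝ → ℝ) (a b : ℝ → ℝ)
    (hmonic : ∀ k, ∀ t ∈ I, (p k t).Monic)
    (hdeg : ∀ k, ∀ t ∈ I, (p k t).natDegree = k)
    (hpos : ∀ k, ∀ t ∈ I, 0 < h k t)
    (horth : ∀ j k, ∀ t ∈ I,
      ∫ x in Set.Ioi (0 : ℝ),
          (p j t).eval x * (p k t).eval x * ((x + t) ^ lam * x ^ α * Real.exp (-x))
        = if j = k then h j t else 0)
    (hrec : ∀ t ∈ I, Polynomial.X * p n t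
        = p (n + 1) t + Polynomial.C (a t) * p n t + Polynomial.C (b t) * p (n - 1) t) :
    ∀ t ∈ I,
      DifferentiableAt ℝ (fun u => u * deriv (fun v => Real.log (D v)) u) t →
      b t = n * (n + α + lam)
          + t * deriv (fun u => u * deriv (fun v => Real.log (D v)) u) t
          - t * deriv (fun v => Real.log (D v)) t := by
  classical
  intro t htI _hdiffH
  have ht0 : 0 < t := hIsub htI
  have hn1 : n - 1 < n := by omega
  set last : Fin n := ⟨n - 1, hn1⟩ with hlast
  set cid : Fin n → ℕ := fun k => (k : ℕ) with hcid
  set ctil : Fin n → ℕ := Function.update cid last n with hctil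
  set Df : ℝ → ℝ := fun u => (McM α lam n cid u).det with hDfdef
  set Tf : ℝ → ℝ := fun u => (McM α lam n ctil u).det with hTfdef
  set c1 : ℝ := (p n t).coeff (n - 1) with hc1
  set cn' : ℝ := (p (n + 1) t).coeff n with hcn'
  set cm' : ℝ := (p (n + 1) t).coeff (n - 1) with hcm'
  set P2 : ℝ := if n = 1 then 0 else (p n t).coeff (n - 2) with hP2
  set N : ℝ := (n : ℝ) * ((n : ℝ) + α + lam) with hNdef
  set SEsum : ℝ := ∑ k ∈ Finset.univ.erase last,
      (McM α lam n (Function.update ctil k (ctil k + 1)) t).det with hSEdef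
  set Fdet : ℝ := (McM α lam n (Function.update cid last (n + 1)) t).det with hFdef
  -- D agrees with Df on I
  have hDeq : ∀ u ∈ I, D u = Df u := by
    intro u hu
    exact (hD u hu).trans rfl
  -- Gauss sum
  have hS2 : (∑ k : Fin n, ((k : ℕ) : ℝ)) * 2 = (n : ℝ) * ((n : ℝ) - 1) := by
    rw [Fin.sum_univ_eq_sum_range (fun i => (i : ℝ)) n]
    have h3 := congrArg (Nat.cast (R := ℝ)) (Finset.sum_range_id_mul_two n)
    push_cast [Nat.cast_sub hn] at h3
    linarith
  have hscal : ∀ c : Fin n → ℕ,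
      (∑ k : Fin n, (lam + α + 1 + (c k : ℝ)))
        = (n : ℝ) * (lam + α + 1) + ∑ k : Fin n, (c k : ℝ) := by
    intro c
    rw [Finset.sum_add_distrib, Finset.sum_const, Finset.card_univ, Fintype.card_fin]
    rw [nsmul_eq_mul]
  have hNcid : (∑ k : Fin n, (lam + α + 1 + (cid k : ℝ))) + (∑ j : Fin n, ((j : ℕ) : ℝ))
      = N := by
    rw [hscal cid]
    simp only [hcid]
    rw [hNdef]
    linear_combination hS2
  have hNctil : (∑ k : Fin n, (lam + α + 1 + (ctil k : ℝ))) + (∑ j : Fin n, ((j : ℕ) : ℝ))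
      = N + 1 := by
    rw [hscal ctil]
    have hterm : ∀ k : Fin n, ((ctil k : ℕ) : ℝ)
        = ((cid k : ℕ) : ℝ) + (if k = last then 1 else 0) := by
      intro k
      by_cases hk : k = last
      · subst hk
        rw [hctil, Function.update_self]
        have : (cid last : ℕ) = n - 1 := rfl
        rw [this, if_pos rfl]
        push_cast [Nat.cast_sub hn]
        ring
      · rw [hctil, Function.update_of_ne hk, if_neg hk, add_zero]
    rw [Finset.sum_congr rfl (fun k _ => hterm k), Finset.sum_add_distrib,
      Finset.sum_ite_eq' Finset.univ last (fun _ => (1:ℝ)), if_pos (Finset.mem_univ last)]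
    simp only [hcid]
    rw [hNdef]
    linear_combination hS2
  -- derivative of Df at any positive u
  have hlastval : (last : ℕ) = n - 1 := rfl
  have hkne : ∀ k : Fin n, k ≠ last → (k : ℕ) < n - 1 := by
    intro k hk
    have h1 : (k : ℕ) ≠ n - 1 := fun hh => hk (Fin.ext (by rw [hh, hlastval]))
    have := k.isLt
    omega
  have hDfderiv : ∀ u : ℝ, 0 < u → HasDerivAt Df ((N * Df u - Tf u) / u) u := by
    intro u hu
    have hd := hasDerivAt_det_McM (α := α) (lam := lam) (n := n) (t := u) hα hu cid
    have hshift : (∑ k : Fin n, (McM α lam n (Function.update cid k (cid k + 1)) u).det)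
        = Tf u := by
      rw [Finset.sum_eq_single last]
      · have hval : cid last + 1 = n := by
          have : cid last = n - 1 := rfl
          omega
        rw [hval]
      · intro k _ hk
        have hklt := hkne k hk
        have hk1 : (k : ℕ) + 1 < n := by omega
        have hne1 : (⟨(k : ℕ) + 1, hk1⟩ : Fin n) ≠ k := by
          intro hh; rw [Fin.ext_iff] at hh; simp at hh
        refine det_McM_dup (k1 := ⟨(k : ℕ) + 1, hk1⟩) (k2 := k) hne1 ?_
        rw [Function.update_of_ne hne1, Function.update_self]
      · intro hh; exact absurd (Finset.mem_univ last) hh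
    rw [hNcid, hshift] at hd
    exact hd
  have hTfderiv : HasDerivAt Tf (((N + 1) * Tf t - (SEsum + Fdet)) / t) t := by
    have hd := hasDerivAt_det_McM (α := α) (lam := lam) (n := n) (t := t) hα ht0 ctil
    have hshift : (∑ k : Fin n, (McM α lam n (Function.update ctil k (ctil k + 1)) t).det)
        = SEsum + Fdet := by
      rw [← Finset.sum_erase_add Finset.univ _ (Finset.mem_univ last), hSEdef]
      congr 1
      have h1 : ctil last = n := by rw [hctil, Function.update_self]
      rw [h1, hctil, Function.update_idem, hFdef]
    rw [hNctil, hshift] at hd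
    exact hd
  -- derivative of Tf at t
  -- orthogonality to powers
  have horthX : ∀ m : ℕ, n ≤ m → ∀ j : ℕ, j < m →
      (∫ x in Set.Ioi (0:ℝ),
        (p m t).eval x * x ^ j * ((x + t) ^ lam * x ^ α * Real.exp (-x))) = 0 := by
    intro m hm j hj
    have horth' := orth_poly hα ht0 (fun k => p k t) (fun k => h k t)
      (fun k => hmonic k t htI) (fun k => hdeg k t htI) (fun j k => horth j k t htI)
      m j (Polynomial.X ^ j) (le_of_eq (Polynomial.natDegree_X_pow j)) hj
    have hfun : (fun x => (p m t).eval x * (Polynomial.X ^ j : Polynomial ℝ).eval x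
          * ((x + t) ^ lam * x ^ α * Real.exp (-x)))
        = fun x => (p m t).eval x * x ^ j * ((x + t) ^ lam * x ^ α * Real.exp (-x)) := by
      funext x; simp
    rw [hfun] at horth'
    exact horth' 
  -- column relations
  have hcoln : ∀ j : Fin n, muF α lam ((j : ℕ) + n) t
      = ∑ i ∈ Finset.range n, (-(p n t).coeff i) * muF α lam ((j : ℕ) + i) t := by
    intro j
    exact moment_column_relation hα ht0 (p n t) n (hdeg n t htI) (hmonic n t htI)
      (horthX n le_rfl) (j : ℕ) j.isLt
  have hcoln1 : ∀ j : Fin n, muF α lam ((j : ℕ) + (n + 1)) t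
      = ∑ i ∈ Finset.range (n + 1), (-(p (n + 1) t).coeff i) * muF α lam ((j : ℕ) + i) t := by
    intro j
    exact moment_column_relation hα ht0 (p (n+1) t) (n+1) (hdeg (n+1) t htI)
      (hmonic (n+1) t htI) (horthX (n+1) (by omega)) (j : ℕ) (Nat.lt_succ_of_lt j.isLt)
  -- determinant identities
  have hupdc : ∀ (w : ℝ), ∀ i : ℕ, i < n → i ≠ n - 1 →
      (McM α lam n (Function.update cid last i) w).det = 0 := by
    intro w i hi hine
    have hne2 : (⟨i, hi⟩ : Fin n) ≠ last := by
      intro hh; apply hine; rw [Fin.ext_iff] at hh; simpa [hlast] using hh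
    refine det_McM_dup (k1 := ⟨i, hi⟩) (k2 := last) hne2 ?_
    rw [Function.update_of_ne hne2, Function.update_self]
  have hupdcid : Function.update cid last (n - 1) = cid := by
    funext k
    by_cases hk : k = last
    · subst hk; rw [Function.update_self]
    · rw [Function.update_of_ne hk]
  have hrangesum : ∀ Q : Polynomial ℝ,
      (∑ i ∈ Finset.range n, (-(Q.coeff i)) * (McM α lam n (Function.update cid last i) t).det)
        = -(Q.coeff (n - 1)) * Df t := by
    intro Q
    rw [Finset.sum_eq_single (n-1)]
    · rw [hupdcid]
    · intro i hi hine
      rw [hupdc t i (Finset.mem_range.mp hi) hine, mul_zero]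
    · intro hh; exact absurd (Finset.mem_range.mpr (by omega)) hh
  have hTft : Tf t = -c1 * Df t := by
    have h0 : Tf t = (McM α lam n (Function.update cid last n) t).det := by
      rw [hTfdef, hctil]
    rw [h0, det_McM_update_expand cid last n n (fun i => -(p n t).coeff i) hcoln,
      hrangesum (p n t), hc1]
  have hFdet : Fdet = (-cm' + cn' * c1) * Df t := by
    rw [hFdef, det_McM_update_expand cid last (n+1) (n+1)
      (fun i => -(p (n+1) t).coeff i) hcoln1, Finset.sum_range_succ, hrangesum (p (n+1) t)]
    have h1 : (McM α lam n (Function.update cid last n) t).det = Tf t := by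
      rw [hTfdef, hctil]
    rw [h1, hTft, ← hcm', ← hcn']
    ring
  have hSE : SEsum = P2 * Df t := by
    by_cases hone : n = 1
    · have hempty : (Finset.univ.erase last : Finset (Fin n)) = ∅ := by
        apply Finset.eq_empty_of_forall_notMem
        intro k hk
        apply Finset.ne_of_mem_erase hk
        apply Fin.ext
        have := k.isLt
        have hlv : (last : ℕ) = n - 1 := rfl
        omega
      rw [hSEdef, hempty, Finset.sum_empty, hP2, if_pos hone, zero_mul]
    · have hn2 : 2 ≤ n := by omega
      have hkE : n - 2 < n := by omega
      set kE : Fin n := ⟨n - 2, hkE⟩ with hkEdef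
      have hkElast : kE ≠ last := by
        intro hh; rw [Fin.ext_iff] at hh; simp [hlast, hkEdef] at hh; omega
      rw [hSEdef, Finset.sum_eq_single kE]
      · -- the k = kE term
        have hctilkE : ctil kE = n - 2 := by
          rw [hctil, Function.update_of_ne hkElast]
        have hval : ctil kE + 1 = n - 1 := by rw [hctilkE]; omega
        rw [hval]
        have hkey : Function.update ctil kE (n - 1)
            = Function.update (Function.update cid kE (n - 1)) last n := by
          rw [hctil, Function.update_comm hkElast]
        rw [hkey, det_McM_update_expand (Function.update cid kE (n - 1)) last n n
          (fun i => -(p n t).coeff i) hcoln]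
        rw [Finset.sum_eq_single (n - 2)]
        · -- i = n - 2 : swap columns
          have hcomp : Function.update (Function.update cid kE (n - 1)) last (n - 2)
              = cid ∘ ⇑(Equiv.swap kE last) := by
            funext k
            by_cases hk : k = last
            · subst hk
              rw [Function.update_self]
              simp [Equiv.swap_apply_right]
              rfl
            · by_cases hk2 : k = kE
              · subst hk2
                rw [Function.update_of_ne hk, Function.update_self]
                simp [Equiv.swap_apply_left]
                rfl
              · rw [Function.update_of_ne hk, Function.update_of_ne hk2]
                simp [Equiv.swap_apply_of_ne_of_ne hk2 hk]
          rw [hcomp, det_McM_comp_perm, Equiv.Perm.sign_swap hkElast]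
          rw [hP2, if_neg hone]
          push_cast
          ring
        · -- other i : duplicates
          intro i hi hine
          have hiu : i < n := Finset.mem_range.mp hi
          by_cases hi1 : i = n - 1
          · subst hi1
            have hdup : (McM α lam n (Function.update
                (Function.update cid kE (n - 1)) last (n - 1)) t).det = 0 := by
              refine det_McM_dup (k1 := kE) (k2 := last) hkElast ?_
              rw [Function.update_of_ne hkElast, Function.update_self, Function.update_self]
            rw [hdup, mul_zero]
          · have hknei : (⟨i, hiu⟩ : Fin n) ≠ last := by
              intro hh; apply hi1; rw [Fin.ext_iff] at hh; simpa [hlast] using hh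
            have hknei2 : (⟨i, hiu⟩ : Fin n) ≠ kE := by
              intro hh; apply hine; rw [Fin.ext_iff] at hh; simpa [hkEdef] using hh
            have hdup : (McM α lam n (Function.update
                (Function.update cid kE (n - 1)) last i) t).det = 0 := by
              refine det_McM_dup (k1 := ⟨i, hiu⟩) (k2 := last) hknei ?_
              rw [Function.update_of_ne hknei, Function.update_of_ne hknei2,
                Function.update_self]
            rw [hdup, mul_zero]
        · intro hh; exact absurd (Finset.mem_range.mpr (by omega)) hh
      · -- other k in erase last : duplicates
        intro k hk hkne2
        have hklast : k ≠ last := Finset.ne_of_mem_erase hk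
        have hkval : (k : ℕ) < n - 1 := hkne k hklast
        have hkvne : (k : ℕ) ≠ n - 2 := by
          intro hh; apply hkne2; rw [Fin.ext_iff]; simpa [hkEdef] using hh
        have hctilk : ctil k = (k : ℕ) := by
          rw [hctil, Function.update_of_ne hklast]
        have hk1 : (k : ℕ) + 1 < n := by omega
        have hk1ne : (⟨(k : ℕ) + 1, hk1⟩ : Fin n) ≠ k := by
          intro hh; rw [Fin.ext_iff] at hh; simp at hh
        have hk1last : (⟨(k : ℕ) + 1, hk1⟩ : Fin n) ≠ last := by
          intro hh; rw [Fin.ext_iff] at hh; simp [hlast] at hh; omega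
        refine det_McM_dup (k1 := ⟨(k : ℕ) + 1, hk1⟩) (k2 := k) hk1ne ?_
        rw [Function.update_of_ne hk1ne, Function.update_self, hctilk, hctil,
          Function.update_of_ne hk1last]
      · intro hh
        exact absurd (Finset.mem_erase.mpr ⟨hkElast, Finset.mem_univ kE⟩) hh
  have hDfpos : 0 < Df t := by rw [← hDeq t htI]; exact hDpos t htI
  -- log-derivative of D
  have hlogderiv : ∀ u ∈ I, HasDerivAt (fun v => Real.log (D v))
      (((N * Df u - Tf u) / u) / D u) u := by
    intro u hu
    have h1 : HasDerivAt D ((N * Df u - Tf u) / u) u := by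
      refine (hDfderiv u (hIsub hu)).congr_of_eventuallyEq ?_
      filter_upwards [hIopen.mem_nhds hu] with v hv
      exact hDeq v hv
    exact h1.log (hDpos u hu).ne'
  have hHloc : (fun u => u * deriv (fun v => Real.log (D v)) u)
      =ᶠ[nhds t] (fun u => N - Tf u / Df u) := by
    filter_upwards [hIopen.mem_nhds htI] with u hu
    rw [(hlogderiv u hu).deriv]
    have hu0 : (0:ℝ) < u := hIsub hu
    have hD0 : D u = Df u := hDeq u hu
    have hDf0 : 0 < Df u := by rw [← hD0]; exact hDpos u hu
    rw [hD0]
    field_simp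
  have hGd : HasDerivAt (fun u => N - Tf u / Df u)
      (-((((N + 1) * Tf t - (SEsum + Fdet)) / t * Df t
          - Tf t * ((N * Df t - Tf t) / t)) / (Df t) ^ 2)) t := by
    exact (hTfderiv.div (hDfderiv t ht0) hDfpos.ne').const_sub N
  have hderivH : deriv (fun u => u * deriv (fun v => Real.log (D v)) u) t
      = -((((N + 1) * Tf t - (SEsum + Fdet)) / t * Df t
          - Tf t * ((N * Df t - Tf t) / t)) / (Df t) ^ 2) := by
    rw [hHloc.deriv_eq]; exact hGd.deriv
  have hderivlog : deriv (fun v => Real.log (D v)) t = ((N * Df t - Tf t) / t) / D t :=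
    (hlogderiv t htI).deriv
  -- coefficient comparison
  have hcoefftop : ∀ k, (p k t).coeff k = 1 := by
    intro k
    have := (hmonic k t htI).coeff_natDegree
    rwa [hdeg k t htI] at this
  have hEq2 : c1 = cn' + a t := by
    have hn' : n - 1 + 1 = n := by omega
    have hL : ∀ q : Polynomial ℝ, (Polynomial.X * q).coeff n = q.coeff (n - 1) := by
      intro q
      conv_lhs => rw [← hn']
      exact Polynomial.coeff_X_mul q (n - 1)
    have hthis : (Polynomial.X * p n t).coeff n = (p (n + 1) t
        + Polynomial.C (a t) * p n t + Polynomial.C (b t) * p (n - 1) t).coeff n := by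
      rw [hrec t htI]
    have hz : (p (n - 1) t).coeff n = 0 :=
      Polynomial.coeff_eq_zero_of_natDegree_lt (by rw [hdeg (n-1) t htI]; omega)
    rw [hL, Polynomial.coeff_add, Polynomial.coeff_add, Polynomial.coeff_C_mul,
      Polynomial.coeff_C_mul, hcoefftop n, hz] at hthis
    rw [hc1, hcn']
    linarith [hthis]
  have hEq1 : P2 = cm' + a t * c1 + b t := by
    by_cases hone : n = 1
    · have hn0 : n - 1 = 0 := by omega
      have hthis : (Polynomial.X * p n t).coeff 0 = (p (n + 1) t
          + Polynomial.C (a t) * p n t + Polynomial.C (b t) * p (n - 1) t).coeff 0 := by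
        rw [hrec t htI]
      rw [Polynomial.mul_coeff_zero, Polynomial.coeff_X_zero, zero_mul,
        Polynomial.coeff_add, Polynomial.coeff_add, Polynomial.coeff_C_mul,
        Polynomial.coeff_C_mul] at hthis
      have h00 : (p (n - 1) t).coeff 0 = 1 := by rw [hn0]; exact hcoefftop 0
      rw [h00, mul_one] at hthis
      rw [hP2, if_pos hone, hcm', hc1, hn0]
      linarith [hthis]
    · have hn2 : 2 ≤ n := by omega
      have hn' : n - 2 + 1 = n - 1 := by omega
      have hL : ∀ q : Polynomial ℝ, (Polynomial.X * q).coeff (n - 1) = q.coeff (n - 2) := by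
        intro q
        conv_lhs => rw [← hn']
        exact Polynomial.coeff_X_mul q (n - 2)
      have hthis : (Polynomial.X * p n t).coeff (n - 1) = (p (n + 1) t
          + Polynomial.C (a t) * p n t + Polynomial.C (b t) * p (n - 1) t).coeff (n - 1) := by
        rw [hrec t htI]
      rw [hL, Polynomial.coeff_add, Polynomial.coeff_add, Polynomial.coeff_C_mul,
        Polynomial.coeff_C_mul, hcoefftop (n - 1)] at hthis
      rw [hP2, if_neg hone, hcm', hc1]
      linarith [hthis]
  have hbt : b t = P2 - cm' - (c1 - cn') * c1 := by
    have ha : a t = c1 - cn' := by linarith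
    rw [← ha]; linarith
  -- final assembly
  rw [hderivH, hderivlog, hbt, hDeq t htI, hTft, hSE, hFdet]
  field_simp
  ring
end

section
/- (Lemma 1, first identity.) Let n ≥ 1, α > 0, λ ∈ ℝ with α + λ + 1 > 0, and t > 0. Let π_n(x;t) be the monic orthogonal polynomial of degree n with respect to w(x,t) = (x+t)^λ x^α e^{−x}, with squared norm h_n(t) and γ_n(t)² = 1/h_n(t). Then the auxiliary quantity R_n(t) = (λ/h_n(t)) ∫₀^∞ π_n(x;t)² w(x,t)/(x+t) dx satisfies R_n(t) = 1 − α γ_n(t)² π_n(0;t) ∫₀^∞ π_n(x;t) w(x,t)/x dx. -/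
open MeasureTheory Set Finset

section Aux
open Filter Polynomial Real Topology

lemma aux_poly_exp_tendsto (r : ℝ[X]) {b : ℝ} (hb : 0 < b) :
    Filter.Tendsto (fun x => r.eval x * Real.exp (-(b * x))) atTop (𝓝 0) := by
  have h1 := (r.comp (Polynomial.C b⁻¹ * Polynomial.X)).tendsto_div_exp_atTop
  have h2 : Tendsto (fun x : ℝ => b * x) atTop atTop :=
    Tendsto.const_mul_atTop hb tendsto_id
  refine (h1.comp h2).congr fun x => ?_
  simp [Polynomial.eval_comp, Real.exp_neg, div_eq_mul_inv, hb.ne', Function.comp,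
    inv_mul_cancel_left₀]

lemma aux_shift_rpow_exp_tendsto (μ : ℝ) (t : ℝ) {b : ℝ} (hb : 0 < b) :
    Tendsto (fun x : ℝ => (x + t) ^ μ * Real.exp (-(b * x))) atTop (𝓝 0) := by
  have h1 := tendsto_rpow_mul_exp_neg_mul_atTop_nhds_zero μ b hb
  have h2 : Tendsto (fun x : ℝ => x + t) atTop atTop := tendsto_atTop_add_const_right _ t tendsto_id
  have h3 := (h1.comp h2).const_mul (Real.exp (b * t))
  rw [mul_zero] at h3
  refine h3.congr fun x => ?_
  simp only [Function.comp]
  rw [show Real.exp (-(b * x)) = Real.exp (b * t) * Real.exp (-b * (x + t)) from by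
    rw [← Real.exp_add]; ring_nf]
  ring

lemma aux_tendsto_half (r : ℝ[X]) (μ β t : ℝ) :
    Tendsto (fun x : ℝ =>
      r.eval x * (x + t) ^ μ * x ^ β * Real.exp (-((1/2) * x))) atTop (𝓝 0) := by
  have hb : (0:ℝ) < 1/6 := by norm_num
  have h1 := aux_poly_exp_tendsto r hb
  have h2 := aux_shift_rpow_exp_tendsto μ t hb
  have h3 := tendsto_rpow_mul_exp_neg_mul_atTop_nhds_zero β (1/6) hb
  have h4 : Tendsto (fun x : ℝ => (r.eval x * Real.exp (-(1/6 * x))) *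
      ((x + t) ^ μ * Real.exp (-(1/6 * x))) * (x ^ β * Real.exp (-(1/6) * x)))
      atTop (𝓝 0) := by simpa using (h1.mul h2).mul h3
  refine h4.congr fun x => ?_
  rw [show Real.exp (-((1/2) * x)) =
      Real.exp (-(1/6 * x)) * Real.exp (-(1/6 * x)) * Real.exp (-(1/6) * x) from by
    rw [← Real.exp_add, ← Real.exp_add]; ring_nf]
  ring

lemma aux_isBigO (r : ℝ[X]) (μ β t : ℝ) :
    (fun x : ℝ => r.eval x * ((x + t) ^ μ * x ^ β * Real.exp (-x)))
      =O[atTop] fun x => Real.exp (-(1/2) * x) := by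
  have h0 := (aux_tendsto_half r μ β t).isBigO_one (F := ℝ)
  have h := h0.mul (Asymptotics.isBigO_refl (fun x : ℝ => Real.exp (-((1/2) * x))) atTop)
  refine (h.congr (fun x => ?_) (fun x => ?_))
  · rw [show Real.exp (-x) = Real.exp (-((1/2) * x)) * Real.exp (-((1/2) * x)) from by
      rw [← Real.exp_add]; ring_nf]
    ring
  · ring_nf

lemma aux_tendsto_zero (r : ℝ[X]) (μ β t : ℝ) :
    Tendsto (fun x : ℝ => r.eval x * ((x + t) ^ μ * x ^ β * Real.exp (-x))) atTop (𝓝 0) := by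
  refine (aux_isBigO r μ β t).trans_tendsto ?_
  have h : Tendsto (fun x : ℝ => -(1/2) * x) atTop atBot :=
    Tendsto.const_mul_atTop_of_neg (by norm_num : -(1/2 : ℝ) < 0) tendsto_id
  exact Real.tendsto_exp_atBot.comp h

lemma aux_contOn (r : ℝ[X]) (μ β : ℝ) {t : ℝ} (ht : 0 < t) {s : Set ℝ}
    (hs : ∀ x ∈ s, 0 < x) :
    ContinuousOn (fun x : ℝ => r.eval x * ((x + t) ^ μ * x ^ β * Real.exp (-x))) s := by
  intro x hx
  have hx0 := hs x hx
  apply ContinuousAt.continuousWithinAt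
  have c1 : ContinuousAt (fun x : ℝ => (x + t) ^ μ) x :=
    (Real.continuousAt_rpow_const _ _ (Or.inl (by positivity))).comp
      (continuousAt_id.add continuousAt_const)
  have c2 : ContinuousAt (fun x : ℝ => x ^ β) x :=
    Real.continuousAt_rpow_const _ _ (Or.inl hx0.ne')
  exact (r.continuousAt).mul ((c1.mul c2).mul ((Real.continuous_exp.comp continuous_neg).continuousAt))

lemma aux_integrable (r : ℝ[X]) (μ : ℝ) {β t : ℝ} (hβ : -1 < β) (ht : 0 < t) :
    IntegrableOn (fun x : ℝ => r.eval x * ((x + t) ^ μ * x ^ β * Real.exp (-x)))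
      (Set.Ioi (0:ℝ)) := by
  have hunion : Set.Ioc (0:ℝ) 1 ∪ Set.Ioi (1:ℝ) = Set.Ioi 0 := Ioc_union_Ioi_eq_Ioi zero_le_one
  rw [← hunion]
  apply IntegrableOn.union
  · obtain ⟨M, hM⟩ := (isCompact_Icc (a := (0:ℝ)) (b := 1)).exists_bound_of_continuousOn
      (f := fun x => r.eval x * (x + t) ^ μ)
      (by
        apply ContinuousOn.mul r.continuous.continuousOn
        intro x hx
        exact ((Real.continuousAt_rpow_const _ _
          (Or.inl (by have h0 := hx.1; intro hc; simp only [Pi.add_apply, id_eq] at hc; nlinarith))).comp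
          (continuousAt_id.add continuousAt_const)).continuousWithinAt)
    have hg : IntegrableOn (fun x : ℝ => M * x ^ β) (Set.Ioc (0:ℝ) 1) := by
      have := (intervalIntegral.intervalIntegrable_rpow' (a := 0) (b := 1) hβ)
      rw [intervalIntegrable_iff_integrableOn_Ioc_of_le zero_le_one] at this
      exact this.const_mul M
    refine Integrable.mono' hg ?_ ?_
    · exact ((aux_contOn r μ β ht (fun x hx => hx.1)).aestronglyMeasurable measurableSet_Ioc)
    · filter_upwards [ae_restrict_mem measurableSet_Ioc] with x hx
      have hx0 : 0 < x := hx.1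
      have hxt : 0 < x + t := by positivity
      have h1 : ‖r.eval x * ((x + t) ^ μ * x ^ β * Real.exp (-x))‖
          = (|r.eval x| * (x + t) ^ μ) * (x ^ β * Real.exp (-x)) := by
        rw [Real.norm_eq_abs, abs_mul, abs_mul, abs_mul]
        rw [abs_of_pos (Real.rpow_pos_of_pos hxt μ), abs_of_pos (Real.rpow_pos_of_pos hx0 β),
          abs_of_pos (Real.exp_pos _)]
        ring
      rw [h1]
      have h2 : (|r.eval x| * (x + t) ^ μ) ≤ M := by
        have := hM x ⟨hx0.le, hx.2⟩
        rw [Real.norm_eq_abs, abs_mul, abs_of_pos (Real.rpow_pos_of_pos hxt μ)] at this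
        exact this
      have h3 : x ^ β * Real.exp (-x) ≤ x ^ β := by
        nlinarith [Real.exp_le_one_iff.mpr (neg_nonpos.mpr hx0.le),
          Real.rpow_pos_of_pos hx0 β, Real.exp_pos (-x)]
      calc (|r.eval x| * (x + t) ^ μ) * (x ^ β * Real.exp (-x))
          ≤ M * (x ^ β * Real.exp (-x)) := by
            apply mul_le_mul_of_nonneg_right h2
            positivity
        _ ≤ M * x ^ β := by
            have hM0 : 0 ≤ M := le_trans (by positivity) h2
            nlinarith
  · exact integrable_of_isBigO_exp_neg (by norm_num : (0:ℝ) < 1/2)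
      (aux_contOn r μ β ht (fun x hx => lt_of_lt_of_le one_pos hx))
      (aux_isBigO r μ β t)

lemma aux_integrable_pair (r1 r2 : ℝ[X]) (μ : ℝ) {β t : ℝ} (hβ : -1 < β) (ht : 0 < t) :
    IntegrableOn (fun x : ℝ => r1.eval x * r2.eval x * ((x + t) ^ μ * x ^ β * Real.exp (-x)))
      (Set.Ioi (0:ℝ)) := by
  have h := aux_integrable (r1 * r2) μ hβ ht
  simpa only [eval_mul] using h

lemma aux_orth (n : ℕ) (lam t : ℝ) {α : ℝ} (hα : 0 < α) (ht : 0 < t)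
    (p : ℕ → Polynomial ℝ) (h : ℕ → ℝ)
    (hmonic : ∀ k, (p k).Monic) (hdeg : ∀ k, (p k).natDegree = k)
    (horth : ∀ j k,
      ∫ x in Set.Ioi (0 : ℝ),
          (p j).eval x * (p k).eval x * ((x + t) ^ lam * x ^ α * Real.exp (-x))
        = if j = k then h j else 0) :
    ∀ (q : Polynomial ℝ), q.natDegree < n →
      ∫ x in Set.Ioi (0 : ℝ),
        (p n).eval x * q.eval x * ((x + t) ^ lam * x ^ α * Real.exp (-x)) = 0 := by
  have hα1 : (-1:ℝ) < α := by linarith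
  suffices H : ∀ m : ℕ, ∀ q : Polynomial ℝ, q.natDegree ≤ m → m < n →
      ∫ x in Set.Ioi (0 : ℝ),
        (p n).eval x * q.eval x * ((x + t) ^ lam * x ^ α * Real.exp (-x)) = 0 by
    intro q hq
    exact H q.natDegree q le_rfl hq
  intro m
  induction m with
  | zero =>
    intro q hq hmn
    have hp0 : p 0 = 1 := (hmonic 0).natDegree_eq_zero.mp (hdeg 0)
    have hqC : q = Polynomial.C (q.coeff 0) := Polynomial.eq_C_of_natDegree_le_zero hq
    have key : ∀ x : ℝ, (p n).eval x * q.eval x * ((x + t) ^ lam * x ^ α * Real.exp (-x))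
        = q.coeff 0 * ((p n).eval x * (p 0).eval x * ((x + t) ^ lam * x ^ α * Real.exp (-x))) := by
      intro x
      rw [hp0]
      conv_lhs => rw [hqC]
      simp only [eval_C, eval_one]
      ring
    simp only [key]
    rw [MeasureTheory.integral_const_mul, horth n 0, if_neg (by omega : n ≠ 0), mul_zero]
  | succ m ih =>
    intro q hq hmn
    set c := q.coeff (m + 1) with hc
    set r := q - Polynomial.C c * p (m + 1) with hr
    have hrdeg : r.natDegree ≤ m := by
      rw [Polynomial.natDegree_le_iff_coeff_eq_zero]
      intro i hi
      have hcoeff : r.coeff i = q.coeff i - c * (p (m + 1)).coeff i := by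
        simp [hr, Polynomial.coeff_sub, Polynomial.coeff_C_mul]
      rcases eq_or_lt_of_le (Nat.succ_le_of_lt hi) with hieq | hilt
      · have : (p (m + 1)).coeff (m + 1) = 1 := by
          have := (hmonic (m + 1)).coeff_natDegree
          rwa [hdeg (m + 1)] at this
        rw [hcoeff, ← hieq, this]; ring
      · have h1 : q.coeff i = 0 := Polynomial.coeff_eq_zero_of_natDegree_lt (lt_of_le_of_lt hq hilt)
        have h2 : (p (m + 1)).coeff i = 0 :=
          Polynomial.coeff_eq_zero_of_natDegree_lt (by rw [hdeg]; exact hilt)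
        rw [hcoeff, h1, h2, mul_zero, sub_zero]
    have hqeval : ∀ x : ℝ, q.eval x = r.eval x + c * (p (m + 1)).eval x := by
      intro x; simp [hr]
    have key : ∀ x : ℝ, (p n).eval x * q.eval x * ((x + t) ^ lam * x ^ α * Real.exp (-x))
        = (p n).eval x * r.eval x * ((x + t) ^ lam * x ^ α * Real.exp (-x))
          + c * ((p n).eval x * (p (m + 1)).eval x * ((x + t) ^ lam * x ^ α * Real.exp (-x))) := by
      intro x; rw [hqeval]; ring
    simp only [key]
    rw [MeasureTheory.integral_add (aux_integrable_pair (p n) r lam hα1 ht)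
      (((aux_integrable_pair (p n) (p (m + 1)) lam hα1 ht)).const_mul c)]
    rw [MeasureTheory.integral_const_mul, horth n (m + 1),
      if_neg (by omega : n ≠ m + 1), mul_zero, add_zero]
    exact ih r hrdeg (by omega)

end Aux

/-- Lemma 1, first identity: the auxiliary quantity
`R_n(t) = (λ/h_n(t)) ∫₀^∞ π_n(x;t)² w(x,t)/(x+t) dx` for the perturbed Laguerre weight
`w(x,t) = (x+t)^λ x^α e^{−x}` satisfies
`R_n(t) = 1 − α γ_n(t)² π_n(0;t) ∫₀^∞ π_n(x;t) w(x,t)/x dx`, where `γ_n(t)² = 1/h_n(t)`. -/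
theorem lemma1_first_identity
    (n : ℕ) (hn : 1 ≤ n) (α lam t : ℝ) (hα : 0 < α) (hsum : α + lam + 1 > 0) (ht : 0 < t)
    (p : ℕ → Polynomial ℝ) (h : ℕ → ℝ)
    (hmonic : ∀ k, (p k).Monic)
    (hdeg : ∀ k, (p k).natDegree = k)
    (hpos : ∀ k, 0 < h k)
    (horth : ∀ j k,
      ∫ x in Set.Ioi (0 : ℝ),
          (p j).eval x * (p k).eval x * ((x + t) ^ lam * x ^ α * Real.exp (-x))
        = if j = k then h j else 0) :
    (lam / h n) * (∫ x in Set.Ioi (0 : ℝ),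
        (p n).eval x ^ 2 * ((x + t) ^ lam * x ^ α * Real.exp (-x)) / (x + t))
      = 1 - α * (1 / h n) * (p n).eval 0 *
          ∫ x in Set.Ioi (0 : ℝ),
            (p n).eval x * ((x + t) ^ lam * x ^ α * Real.exp (-x)) / x := by
  classical
  have hα1 : (-1:ℝ) < α := by linarith
  have hα1' : (-1:ℝ) < α - 1 := by linarith
  have horthlt := aux_orth n lam t hα ht p h hmonic hdeg horth
  set pn := p n with hpn
  -- Step 1: rewrite the first goal integral
  have hA : (∫ x in Set.Ioi (0 : ℝ),
        pn.eval x ^ 2 * ((x + t) ^ lam * x ^ α * Real.exp (-x)) / (x + t))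
      = ∫ x in Set.Ioi (0 : ℝ),
        (pn * pn).eval x * ((x + t) ^ (lam - 1) * x ^ α * Real.exp (-x)) := by
    refine setIntegral_congr_fun measurableSet_Ioi fun x hx => ?_
    have hx0 : (0:ℝ) < x := hx
    have hxt : (0:ℝ) < x + t := by positivity
    rw [Polynomial.eval_mul, Real.rpow_sub_one hxt.ne']
    field_simp
  -- Step 3: rewrite the second goal integral
  have hC : (∫ x in Set.Ioi (0 : ℝ),
        pn.eval x * ((x + t) ^ lam * x ^ α * Real.exp (-x)) / x)
      = ∫ x in Set.Ioi (0 : ℝ),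
        pn.eval x * ((x + t) ^ lam * x ^ (α - 1) * Real.exp (-x)) := by
    refine setIntegral_congr_fun measurableSet_Ioi fun x hx => ?_
    have hx0 : (0:ℝ) < x := hx
    rw [Real.rpow_sub_one hx0.ne']
    field_simp
  set A := ∫ x in Set.Ioi (0 : ℝ),
      (pn * pn).eval x * ((x + t) ^ (lam - 1) * x ^ α * Real.exp (-x)) with hAdef
  set B := ∫ x in Set.Ioi (0 : ℝ),
      (pn * pn).eval x * ((x + t) ^ lam * x ^ (α - 1) * Real.exp (-x)) with hBdef
  set CC := ∫ x in Set.Ioi (0 : ℝ),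
      pn.eval x * ((x + t) ^ lam * x ^ (α - 1) * Real.exp (-x)) with hCdef
  -- divX decomposition
  have heval : ∀ x : ℝ, pn.eval x = x * (pn.divX.eval x) + pn.eval 0 := by
    intro x
    conv_lhs => rw [← Polynomial.X_mul_divX_add pn]
    simp [Polynomial.coeff_zero_eq_eval_zero]
  have hdivXdeg : pn.divX.natDegree < n := by
    rw [Polynomial.natDegree_divX_eq_natDegree_tsub_one, hpn, hdeg n]
    omega
  -- Step 4: B = pn(0) * CC
  have hB : B = pn.eval 0 * CC := by
    have key : ∀ x ∈ Set.Ioi (0:ℝ),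
        (pn * pn).eval x * ((x + t) ^ lam * x ^ (α - 1) * Real.exp (-x))
        = pn.eval x * pn.divX.eval x * ((x + t) ^ lam * x ^ α * Real.exp (-x))
          + pn.eval 0 * (pn.eval x * ((x + t) ^ lam * x ^ (α - 1) * Real.exp (-x))) := by
      intro x hx
      have hx0 : (0:ℝ) < x := hx
      rw [Polynomial.eval_mul, Real.rpow_sub_one hx0.ne', heval x]
      field_simp
      try ring
    rw [hBdef, setIntegral_congr_fun measurableSet_Ioi key,
      MeasureTheory.integral_add (aux_integrable_pair pn pn.divX lam hα1 ht)
        ((aux_integrable pn lam hα1' ht).const_mul _),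
      MeasureTheory.integral_const_mul, horthlt pn.divX hdivXdeg, zero_add, hCdef]
  -- Step 5: FTC
  set F : ℝ → ℝ := fun x => pn.eval x ^ 2 * ((x + t) ^ lam * x ^ α * Real.exp (-x)) with hFdef
  set F' : ℝ → ℝ := fun x =>
      (2 * pn.eval x * (Polynomial.derivative pn).eval x)
        * ((x + t) ^ lam * x ^ α * Real.exp (-x))
      + lam * ((pn * pn).eval x * ((x + t) ^ (lam - 1) * x ^ α * Real.exp (-x)))
      + α * ((pn * pn).eval x * ((x + t) ^ lam * x ^ (α - 1) * Real.exp (-x)))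
      - (pn * pn).eval x * ((x + t) ^ lam * x ^ α * Real.exp (-x)) with hF'def
  have hderiv : ∀ x ∈ Set.Ioi (0:ℝ), HasDerivAt F (F' x) x := by
    intro x hx
    have hx0 : (0:ℝ) < x := hx
    have hxt : (0:ℝ) < x + t := by positivity
    have h1 : HasDerivAt (fun y : ℝ => pn.eval y ^ 2)
        (2 * pn.eval x ^ 1 * (Polynomial.derivative pn).eval x) x := by
      simpa using (pn.hasDerivAt x).fun_pow 2
    have h2 : HasDerivAt (fun y : ℝ => (y + t) ^ lam) (lam * (x + t) ^ (lam - 1)) x := by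
      have hr := Real.hasDerivAt_rpow_const (x := x + t) (p := lam) (Or.inl hxt.ne')
      simpa [Function.comp_def] using HasDerivAt.comp x hr ((hasDerivAt_id x).add_const t)
    have h3 : HasDerivAt (fun y : ℝ => y ^ α) (α * x ^ (α - 1)) x :=
      Real.hasDerivAt_rpow_const (Or.inl hx0.ne')
    have h4 : HasDerivAt (fun y : ℝ => Real.exp (-y)) (-Real.exp (-x)) x := by
      simpa [Function.comp_def] using HasDerivAt.comp x (Real.hasDerivAt_exp (-x)) (hasDerivAt_neg x)
    have htot := h1.mul ((h2.mul h3).mul h4)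
    refine htot.congr_deriv ?_
    simp only [hF'def, Polynomial.eval_mul, pow_one, Pi.mul_apply]
    ring
  have hcont : ContinuousWithinAt F (Set.Ici (0:ℝ)) 0 := by
    apply ContinuousAt.continuousWithinAt
    have c1 : ContinuousAt (fun x : ℝ => (x + t) ^ lam) 0 := by
      apply ContinuousAt.rpow_const (continuousAt_id.add continuousAt_const)
      left
      simpa using ht.ne'
    have c2 : ContinuousAt (fun x : ℝ => x ^ α) 0 :=
      continuousAt_id.rpow_const (Or.inr hα.le)
    exact ((pn.continuousAt).pow 2).mul ((c1.mul c2).mul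
      ((Real.continuous_exp.comp continuous_neg).continuousAt))
  have hF0 : F 0 = 0 := by
    simp [hFdef, Real.zero_rpow hα.ne']
  have htop : Filter.Tendsto F Filter.atTop (nhds 0) := by
    refine (aux_tendsto_zero (pn * pn) lam α t).congr fun x => ?_
    simp only [Polynomial.eval_mul, hFdef]
    ring
  have hF'int : IntegrableOn F' (Set.Ioi (0:ℝ)) := by
    have t1 : IntegrableOn (fun x : ℝ => (2 * pn.eval x * (Polynomial.derivative pn).eval x)
        * ((x + t) ^ lam * x ^ α * Real.exp (-x))) (Set.Ioi (0:ℝ)) := by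
      have := aux_integrable (Polynomial.C 2 * pn * Polynomial.derivative pn) lam hα1 ht
      simpa only [Polynomial.eval_mul, Polynomial.eval_C] using this
    have t2 := (aux_integrable (pn * pn) (lam - 1) hα1 ht).const_mul lam
    have t3 := (aux_integrable (pn * pn) lam hα1' ht).const_mul α
    have t4 := aux_integrable (pn * pn) lam hα1 ht
    exact ((t1.add t2).add t3).sub t4
  have hFTC : ∫ x in Set.Ioi (0:ℝ), F' x = 0 := by
    rw [MeasureTheory.integral_Ioi_of_hasDerivAt_of_tendsto hcont hderiv hF'int htop, hF0,
      sub_zero]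
  -- expand the FTC integral
  have horth_deriv : ∫ x in Set.Ioi (0:ℝ), (2 * pn.eval x * (Polynomial.derivative pn).eval x)
      * ((x + t) ^ lam * x ^ α * Real.exp (-x)) = 0 := by
    have hdegd : (Polynomial.C 2 * Polynomial.derivative pn).natDegree < n := by
      refine lt_of_le_of_lt (Polynomial.natDegree_C_mul_le _ _) ?_
      have := Polynomial.natDegree_derivative_lt (p := pn) (by rw [hpn, hdeg n]; omega)
      rwa [hpn, hdeg n] at this
    have hz := horthlt (Polynomial.C 2 * Polynomial.derivative pn) hdegd
    refine Eq.trans ?_ hz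
    refine MeasureTheory.integral_congr_ae (Filter.Eventually.of_forall fun x => ?_)
    simp only [Polynomial.eval_mul, Polynomial.eval_C]
    ring
  have hnn : ∫ x in Set.Ioi (0:ℝ), (pn * pn).eval x
      * ((x + t) ^ lam * x ^ α * Real.exp (-x)) = h n := by
    have hz := horth n n
    rw [if_pos rfl] at hz
    refine Eq.trans ?_ hz
    refine MeasureTheory.integral_congr_ae (Filter.Eventually.of_forall fun x => ?_)
    simp only [Polynomial.eval_mul]
    rw [hpn]
  have hexpand : lam * A + α * B - h n = 0 := by
    have t1 : IntegrableOn (fun x : ℝ => (2 * pn.eval x * (Polynomial.derivative pn).eval x)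
        * ((x + t) ^ lam * x ^ α * Real.exp (-x))) (Set.Ioi (0:ℝ)) := by
      have := aux_integrable (Polynomial.C 2 * pn * Polynomial.derivative pn) lam hα1 ht
      simpa only [Polynomial.eval_mul, Polynomial.eval_C] using this
    have t2 := (aux_integrable (pn * pn) (lam - 1) hα1 ht).const_mul lam
    have t3 := (aux_integrable (pn * pn) lam hα1' ht).const_mul α
    have t4 := aux_integrable (pn * pn) lam hα1 ht
    have expand : ∫ x in Set.Ioi (0:ℝ), F' x
        = (∫ x in Set.Ioi (0:ℝ), (2 * pn.eval x * (Polynomial.derivative pn).eval x)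
            * ((x + t) ^ lam * x ^ α * Real.exp (-x)))
          + lam * A + α * B
          - ∫ x in Set.Ioi (0:ℝ), (pn * pn).eval x
              * ((x + t) ^ lam * x ^ α * Real.exp (-x)) := by
      have t12 : Integrable (fun x : ℝ =>
          (2 * pn.eval x * (Polynomial.derivative pn).eval x)
            * ((x + t) ^ lam * x ^ α * Real.exp (-x))
          + lam * ((pn * pn).eval x * ((x + t) ^ (lam - 1) * x ^ α * Real.exp (-x))))
          (volume.restrict (Set.Ioi 0)) := t1.add t2
      have t123 : Integrable (fun x : ℝ =>
          (2 * pn.eval x * (Polynomial.derivative pn).eval x)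
            * ((x + t) ^ lam * x ^ α * Real.exp (-x))
          + lam * ((pn * pn).eval x * ((x + t) ^ (lam - 1) * x ^ α * Real.exp (-x)))
          + α * ((pn * pn).eval x * ((x + t) ^ lam * x ^ (α - 1) * Real.exp (-x))))
          (volume.restrict (Set.Ioi 0)) := t12.add t3
      simp only [hF'def]
      rw [MeasureTheory.integral_sub t123 t4,
        MeasureTheory.integral_add t12 t3,
        MeasureTheory.integral_add t1 t2,
        MeasureTheory.integral_const_mul, MeasureTheory.integral_const_mul,
        ← hAdef, ← hBdef]
    rw [hFTC, horth_deriv, hnn, zero_add] at expand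
    linarith
  -- final assembly
  rw [hA, hC]
  have hhn := hpos n
  have hfinal : lam * A = h n - α * (pn.eval 0) * CC := by
    rw [hB] at hexpand; linarith
  field_simp
  linear_combination hfinal
end

section
/- (Lemma 1, third identity.) Let n ≥ 0, α > 0, λ ∈ ℝ with α + λ + 1 > 0. Suppose on an open interval I ⊂ (0,∞) the squared norm h_n(t) = ∫₀^∞ π_n(x;t)² w(x,t) dx of the monic orthogonal polynomial π_n(x;t) with respect to w(x,t) = (x+t)^λ x^α e^{−x} is differentiable in t, and set γ_n(t) = h_n(t)^{−1/2}. Then for t ∈ I, (d/dt) log γ_n(t) = −1/2 + (α/2) γ_n(t)² ∫₀^∞ π_n(x;t)² w(x,t)/x dx. -/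
open MeasureTheory Set Finset

lemma poly_abs_eval_le (Q : Polynomial ℝ) :
    ∃ C : ℝ, 0 ≤ C ∧ (∀ x : ℝ, 0 ≤ x → x ≤ 1 → |Q.eval x| ≤ C) ∧
      (∀ x : ℝ, 1 ≤ x → |Q.eval x| ≤ C * x ^ (Q.natDegree : ℝ)) := by
  set d := Q.natDegree
  refine ⟨∑ i ∈ Finset.range (d + 1), |Q.coeff i|,
    Finset.sum_nonneg fun _ _ => abs_nonneg _, ?_, ?_⟩
  · intro x hx0 hx1
    rw [Polynomial.eval_eq_sum_range]
    refine (Finset.abs_sum_le_sum_abs _ _).trans (Finset.sum_le_sum fun i _ => ?_)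
    rw [abs_mul]
    have : |x ^ i| ≤ 1 := by
      rw [abs_pow, abs_of_nonneg hx0]
      exact pow_le_one₀ hx0 hx1
    nlinarith [abs_nonneg (Q.coeff i)]
  · intro x hx
    have hx0 : (0:ℝ) ≤ x := le_trans zero_le_one hx
    rw [Polynomial.eval_eq_sum_range, Finset.sum_mul]
    refine (Finset.abs_sum_le_sum_abs _ _).trans (Finset.sum_le_sum fun i hi => ?_)
    rw [abs_mul, abs_pow, abs_of_nonneg hx0, Real.rpow_natCast x d]
    have h1 : x ^ i ≤ x ^ d := pow_le_pow_right₀ hx (Nat.lt_succ_iff.mp (Finset.mem_range.mp hi))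
    nlinarith [abs_nonneg (Q.coeff i), pow_nonneg hx0 i]

set_option maxHeartbeats 1000000 in
lemma weight_integrable (Q : Polynomial ℝ) (s μe β : ℝ) (hs : 0 < s) (hβ : -1 < β) :
    IntegrableOn (fun x : ℝ => Q.eval x * ((x + s) ^ μe * x ^ β * Real.exp (-x)))
      (Set.Ioi (0:ℝ)) := by
  obtain ⟨C, hC0, hC1, hC2⟩ := poly_abs_eval_le Q
  set D : ℝ := (Q.natDegree : ℝ) with hD
  have hD0 : 0 ≤ D := Nat.cast_nonneg _
  set γ : ℝ := D + |μe| + |β| with hγdef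
  have hγ : -1 < γ := by
    have := abs_nonneg μe; have := abs_nonneg β; linarith
  set K : ℝ := C * (s ^ μe + (1+s) ^ μe + (1+s) ^ |μe|) with hK
  have hs1 : (0:ℝ) < 1 + s := by linarith
  have hr1 : 0 ≤ s ^ μe := Real.rpow_nonneg hs.le _
  have hr2 : 0 ≤ (1+s) ^ μe := Real.rpow_nonneg hs1.le _
  have hr3 : 0 ≤ (1+s) ^ |μe| := Real.rpow_nonneg hs1.le _
  have hK0 : 0 ≤ K := by positivity
  have hg : IntegrableOn (fun x : ℝ =>
      K * (Real.exp (-x) * x ^ β + Real.exp (-x) * x ^ γ)) (Set.Ioi (0:ℝ)) := by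
    have h1 := Real.GammaIntegral_convergent (show 0 < β + 1 by linarith)
    have h2 := Real.GammaIntegral_convergent (show 0 < γ + 1 by linarith)
    simp only [add_sub_cancel_right] at h1 h2
    exact (h1.add h2).const_mul K
  have hmeas : AEStronglyMeasurable
      (fun x : ℝ => Q.eval x * ((x + s) ^ μe * x ^ β * Real.exp (-x)))
      (volume.restrict (Set.Ioi 0)) := by
    apply ContinuousOn.aestronglyMeasurable _ measurableSet_Ioi
    refine ContinuousOn.mul (Q.continuous_aeval.continuousOn) ?_
    refine ContinuousOn.mul (ContinuousOn.mul ?_ ?_) ?_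
    · exact ContinuousOn.rpow_const (by fun_prop)
        (fun x hx => Or.inl (by have := mem_Ioi.mp hx; positivity))
    · exact ContinuousOn.rpow_const continuousOn_id
        (fun x hx => Or.inl (ne_of_gt (mem_Ioi.mp hx)))
    · fun_prop
  refine Integrable.mono' hg hmeas ?_
  rw [ae_restrict_iff' measurableSet_Ioi]
  refine Filter.Eventually.of_forall (fun x hx => ?_)
  have hx0 : (0:ℝ) < x := mem_Ioi.mp hx
  have hxs : (0:ℝ) < x + s := by linarith
  have he : (0:ℝ) < Real.exp (-x) := Real.exp_pos _
  have hxb : (0:ℝ) ≤ x ^ β := Real.rpow_nonneg hx0.le _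
  have hxγ : (0:ℝ) ≤ x ^ γ := Real.rpow_nonneg hx0.le _
  have hnorm : ‖Q.eval x * ((x + s) ^ μe * x ^ β * Real.exp (-x))‖
      = |Q.eval x| * ((x + s) ^ μe * x ^ β * Real.exp (-x)) := by
    rw [Real.norm_eq_abs, abs_mul,
      abs_of_nonneg (show (0:ℝ) ≤ (x + s) ^ μe * x ^ β * Real.exp (-x) by positivity)]
  rw [hnorm, hK]
  have hxsnn : (0:ℝ) ≤ (x+s) ^ μe := Real.rpow_nonneg hxs.le _
  rcases le_or_gt x 1 with hx1 | hx1
  · have hb : (x+s) ^ μe ≤ s ^ μe + (1+s) ^ μe := by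
      rcases le_or_gt 0 μe with hμ | hμ
      · have : (x+s) ^ μe ≤ (1+s) ^ μe :=
          Real.rpow_le_rpow hxs.le (by linarith) hμ
        linarith
      · have : (x+s) ^ μe ≤ s ^ μe :=
          Real.rpow_le_rpow_of_nonpos hs (by linarith) hμ.le
        linarith
    have e1 : (0:ℝ) ≤ x ^ β * Real.exp (-x) := by positivity
    have e2 := mul_le_mul_of_nonneg_right hb e1
    have e3 := mul_le_mul (hC1 x hx0.le hx1) e2 (by positivity) hC0
    nlinarith [mul_nonneg he.le hxγ, mul_nonneg (mul_nonneg hC0 hr3) e1]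
  · have hb2 : (x+s) ^ μe ≤ (1+s) ^ |μe| * x ^ |μe| := by
      have s1 : (x+s) ^ μe ≤ (x+s) ^ |μe| :=
        Real.rpow_le_rpow_of_exponent_le (by linarith) (le_abs_self μe)
      have s2 : (x+s) ^ |μe| ≤ ((1+s) * x) ^ |μe| := by
        apply Real.rpow_le_rpow hxs.le _ (abs_nonneg _)
        nlinarith
      rw [Real.mul_rpow hs1.le hx0.le] at s2
      linarith
    have hβ2 : x ^ β ≤ x ^ |β| :=
      Real.rpow_le_rpow_of_exponent_le hx1.le (le_abs_self β)
    have e1 : (0:ℝ) ≤ x ^ |β| * Real.exp (-x) := by positivity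
    have e2 : (x+s) ^ μe * (x ^ β * Real.exp (-x))
        ≤ ((1+s) ^ |μe| * x ^ |μe|) * (x ^ |β| * Real.exp (-x)) := by
      apply mul_le_mul hb2 _ (by positivity) (by positivity)
      exact mul_le_mul_of_nonneg_right hβ2 he.le
    have e3 := mul_le_mul (hC2 x hx1.le) e2 (by positivity)
      (by positivity : (0:ℝ) ≤ C * x ^ D)
    have e4 : x ^ D * x ^ |μe| * x ^ |β| = x ^ γ := by
      rw [hγdef, ← Real.rpow_add hx0, ← Real.rpow_add hx0]
    have e4' : C * x ^ D * ((1+s) ^ |μe| * x ^ |μe| * (x ^ |β| * Real.exp (-x)))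
        = (C * (1+s) ^ |μe|) * (x ^ γ * Real.exp (-x)) := by rw [← e4]; ring
    have e5 : |Q.eval x| * ((x + s) ^ μe * x ^ β * Real.exp (-x))
        ≤ (C * (1+s) ^ |μe|) * (x ^ γ * Real.exp (-x)) := by nlinarith [e3, e4']
    have hA : (0:ℝ) ≤ (C * (s ^ μe + (1+s) ^ μe + (1+s) ^ |μe|)) * (Real.exp (-x) * x ^ β) := by
      positivity
    have hB := mul_le_mul_of_nonneg_right
      (show C * (1+s) ^ |μe| ≤ C * (s ^ μe + (1+s) ^ μe + (1+s) ^ |μe|) by nlinarith)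
      (show (0:ℝ) ≤ x ^ γ * Real.exp (-x) by positivity)
    nlinarith [e5, hA, hB]

lemma weight_integrable_mul (A B : Polynomial ℝ) (s μe β : ℝ) (hs : 0 < s) (hβ : -1 < β) :
    IntegrableOn (fun x : ℝ => A.eval x * B.eval x * ((x + s) ^ μe * x ^ β * Real.exp (-x)))
      (Set.Ioi (0:ℝ)) := by
  have hh := weight_integrable (A * B) s μe β hs hβ
  simp only [Polynomial.eval_mul] at hh
  exact hh

lemma weight_integrable_sq (A : Polynomial ℝ) (s μe β : ℝ) (hs : 0 < s) (hβ : -1 < β) :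
    IntegrableOn (fun x : ℝ => A.eval x ^ 2 * ((x + s) ^ μe * x ^ β * Real.exp (-x)))
      (Set.Ioi (0:ℝ)) := by
  have hh := weight_integrable (A ^ 2) s μe β hs hβ
  simp only [Polynomial.eval_pow] at hh
  exact hh

set_option maxHeartbeats 1000000 in
/-- Lemma 1, third identity: with `γ_n(t) = h_n(t)^{−1/2}` for the squared
norm `h_n(t)` of the monic orthogonal polynomial `π_n(x;t)` with respect to the perturbed
Laguerre weight `w(x,t) = (x+t)^λ x^α e^{−x}`, one has
`(d/dt) log γ_n(t) = −1/2 + (α/2) γ_n(t)² ∫₀^∞ π_n(x;t)² w(x,t)/x dx`. -/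
theorem lemma1_third_identity
    (n : ℕ) (α lam : ℝ) (hα : 0 < α) (hsum : α + lam + 1 > 0)
    (I : Set ℝ) (hIopen : IsOpen I) (hIsub : I ⊆ Set.Ioi (0 : ℝ))
    (p : ℕ → ℝ → Polynomial ℝ) (h : ℕ → ℝ → ℝ)
    (hmonic : ∀ k, ∀ t ∈ I, (p k t).Monic)
    (hdeg : ∀ k, ∀ t ∈ I, (p k t).natDegree = k)
    (hpos : ∀ k, ∀ t ∈ I, 0 < h k t)
    (hnorm : ∀ t ∈ I, h n t
      = ∫ x in Set.Ioi (0 : ℝ),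
          (p n t).eval x ^ 2 * ((x + t) ^ lam * x ^ α * Real.exp (-x)))
    (horth : ∀ j k, ∀ t ∈ I,
      ∫ x in Set.Ioi (0 : ℝ),
          (p j t).eval x * (p k t).eval x * ((x + t) ^ lam * x ^ α * Real.exp (-x))
        = if j = k then h j t else 0)
    (hdiff : ∀ t ∈ I, DifferentiableAt ℝ (fun u => h n u) t) :
    ∀ t ∈ I,
      deriv (fun u => Real.log ((h n u) ^ (-(1 : ℝ) / 2))) t
        = -(1 / 2) + (α / 2) * (1 / h n t) *
            ∫ x in Set.Ioi (0 : ℝ),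
              (p n t).eval x ^ 2 * ((x + t) ^ lam * x ^ α * Real.exp (-x)) / x := by
  have hα' : (-1 : ℝ) < α := by linarith
  have hspan : ∀ s ∈ I, ∀ m : ℕ, m ≤ n → ∀ r : Polynomial ℝ,
      r.degree < (m : WithBot ℕ) →
      (∫ x in Set.Ioi (0:ℝ),
        (p n s).eval x * r.eval x * ((x + s) ^ lam * x ^ α * Real.exp (-x))) = 0 := by
    intro s hs m
    have hs0 : (0:ℝ) < s := hIsub hs
    induction m with
    | zero =>
      intro _ r hr
      have hr0 : r = 0 := by
        rw [← Polynomial.degree_eq_bot]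
        exact Nat.WithBot.lt_zero_iff.mp (by exact_mod_cast hr)
      simp [hr0]
    | succ m ih =>
      intro hmn r hr
      rcases eq_or_ne r 0 with rfl | hr0
      · simp
      rcases lt_or_ge r.degree (m : WithBot ℕ) with hcase | hcase
      · exact ih (by omega) r hcase
      have hpm : (p m s).Monic := hmonic m s hs
      have hpmd : (p m s).natDegree = m := hdeg m s hs
      have hrd : r.natDegree = m := by
        have h1 : r.natDegree < m + 1 := by
          rw [Polynomial.natDegree_lt_iff_degree_lt hr0]
          exact_mod_cast hr
        have h2 : (m : WithBot ℕ) ≤ (r.natDegree : WithBot ℕ) := by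
          rwa [← Polynomial.degree_eq_natDegree hr0]
        have h2' : m ≤ r.natDegree := by exact_mod_cast h2
        omega
      set c := r.leadingCoeff with hc
      have hc0 : c ≠ 0 := Polynomial.leadingCoeff_ne_zero.mpr hr0
      set r' := r - Polynomial.C c * p m s with hr'def
      have hdm : (Polynomial.C c * p m s).degree = r.degree := by
        rw [Polynomial.degree_C_mul hc0, Polynomial.degree_eq_natDegree hpm.ne_zero,
          Polynomial.degree_eq_natDegree hr0, hpmd, hrd]
      have hlc : r.leadingCoeff = (Polynomial.C c * p m s).leadingCoeff := by
        rw [Polynomial.leadingCoeff_mul, Polynomial.leadingCoeff_C, hpm.leadingCoeff, mul_one]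
      have hdr' : r'.degree < (m : WithBot ℕ) := by
        have := Polynomial.degree_sub_lt hdm.symm hr0 hlc
        rwa [Polynomial.degree_eq_natDegree hr0, hrd, ← hr'def] at this
      have i1 : IntegrableOn (fun x : ℝ =>
          (p n s).eval x * (p m s).eval x * ((x + s) ^ lam * x ^ α * Real.exp (-x)))
          (Set.Ioi (0:ℝ)) := weight_integrable_mul (p n s) (p m s) s lam α hs0 hα'
      have i2 : IntegrableOn (fun x : ℝ =>
          (p n s).eval x * r'.eval x * ((x + s) ^ lam * x ^ α * Real.exp (-x)))
          (Set.Ioi (0:ℝ)) := weight_integrable_mul (p n s) r' s lam α hs0 hα'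
      have key : (fun x : ℝ =>
            (p n s).eval x * r.eval x * ((x + s) ^ lam * x ^ α * Real.exp (-x)))
          = fun x : ℝ => c * ((p n s).eval x * (p m s).eval x *
              ((x + s) ^ lam * x ^ α * Real.exp (-x)))
            + (p n s).eval x * r'.eval x * ((x + s) ^ lam * x ^ α * Real.exp (-x)) := by
        funext x
        have : r.eval x = c * (p m s).eval x + r'.eval x := by
          rw [hr'def, Polynomial.eval_sub, Polynomial.eval_mul, Polynomial.eval_C]; ring
        rw [this]; ring
      rw [key, integral_add (i1.const_mul c) i2, integral_const_mul,
        horth n m s hs, if_neg (by omega), ih (by omega) r' hdr']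
      ring
  intro t ht
  have ht0 : (0:ℝ) < t := hIsub ht
  have hqmon : (p n t).Monic := hmonic n t ht
  have hq0 : (p n t) ≠ 0 := hqmon.ne_zero
  have hqdeg : (p n t).degree = (n : WithBot ℕ) := by
    rw [Polynomial.degree_eq_natDegree hq0, hdeg n t ht]
  have hmin : ∀ s ∈ I, h n s ≤ ∫ x in Set.Ioi (0:ℝ),
      (p n t).eval x ^ 2 * ((x + s) ^ lam * x ^ α * Real.exp (-x)) := by
    intro s hs
    have hs0 : (0:ℝ) < s := hIsub hs
    have hps : (p n s).Monic := hmonic n s hs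
    set r := p n t - p n s with hrdef
    have hrdeg : r.degree < (n : WithBot ℕ) := by
      rcases eq_or_ne (p n t) (p n s) with he | hne
      · rw [hrdef, he, sub_self, Polynomial.degree_zero]
        exact WithBot.bot_lt_coe n
      · have h1 : (p n t).degree = (p n s).degree := by
          rw [Polynomial.degree_eq_natDegree hq0, Polynomial.degree_eq_natDegree hps.ne_zero,
            hdeg n t ht, hdeg n s hs]
        have := Polynomial.degree_sub_lt h1 hq0
          (by rw [hqmon.leadingCoeff, hps.leadingCoeff])
        rwa [← hrdef, hqdeg] at this
    have i1 : IntegrableOn (fun x : ℝ =>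
        (p n s).eval x ^ 2 * ((x + s) ^ lam * x ^ α * Real.exp (-x))) (Set.Ioi (0:ℝ)) :=
      weight_integrable_sq (p n s) s lam α hs0 hα'
    have i2 : IntegrableOn (fun x : ℝ =>
        (p n s).eval x * r.eval x * ((x + s) ^ lam * x ^ α * Real.exp (-x))) (Set.Ioi (0:ℝ)) :=
      weight_integrable_mul (p n s) r s lam α hs0 hα'
    have i3 : IntegrableOn (fun x : ℝ =>
        r.eval x ^ 2 * ((x + s) ^ lam * x ^ α * Real.exp (-x))) (Set.Ioi (0:ℝ)) :=
      weight_integrable_sq r s lam α hs0 hα'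
    have key : (fun x : ℝ => (p n t).eval x ^ 2 * ((x + s) ^ lam * x ^ α * Real.exp (-x)))
        = fun x : ℝ => (p n s).eval x ^ 2 * ((x + s) ^ lam * x ^ α * Real.exp (-x))
          + (2 * ((p n s).eval x * r.eval x * ((x + s) ^ lam * x ^ α * Real.exp (-x)))
             + r.eval x ^ 2 * ((x + s) ^ lam * x ^ α * Real.exp (-x))) := by
      funext x
      have : (p n t).eval x = (p n s).eval x + r.eval x := by
        rw [hrdef, Polynomial.eval_sub]; ring
      rw [this]; ring
    have i2' : IntegrableOn (fun x : ℝ =>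
        2 * ((p n s).eval x * r.eval x * ((x + s) ^ lam * x ^ α * Real.exp (-x))))
        (Set.Ioi (0:ℝ)) := i2.const_mul 2
    have i23 : IntegrableOn (fun x : ℝ =>
        2 * ((p n s).eval x * r.eval x * ((x + s) ^ lam * x ^ α * Real.exp (-x)))
          + r.eval x ^ 2 * ((x + s) ^ lam * x ^ α * Real.exp (-x)))
        (Set.Ioi (0:ℝ)) := i2'.add i3
    rw [key, integral_add i1 i23, integral_add i2' i3, integral_const_mul,
      hspan s hs n le_rfl r hrdeg, ← hnorm s hs]
    have h3 : 0 ≤ ∫ x in Set.Ioi (0:ℝ),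
        r.eval x ^ 2 * ((x + s) ^ lam * x ^ α * Real.exp (-x)) :=
      setIntegral_nonneg measurableSet_Ioi fun x hx => by
        have hx0 : (0:ℝ) < x := hx
        positivity
    linarith
  -- derivative of the comparison function
  have hFderiv : HasDerivAt
      (fun s => ∫ x in Set.Ioi (0:ℝ),
        (p n t).eval x ^ 2 * ((x + s) ^ lam * x ^ α * Real.exp (-x)))
      (∫ x in Set.Ioi (0:ℝ),
        (p n t).eval x ^ 2 * (lam * (x + t) ^ (lam - 1) * x ^ α * Real.exp (-x))) t := by
    have main := hasDerivAt_integral_of_dominated_loc_of_deriv_le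
      (μ := volume.restrict (Set.Ioi (0:ℝ)))
      (F := fun s x => (p n t).eval x ^ 2 * ((x + s) ^ lam * x ^ α * Real.exp (-x)))
      (F' := fun s x => (p n t).eval x ^ 2 * (lam * (x + s) ^ (lam - 1) * x ^ α * Real.exp (-x)))
      (x₀ := t) (s := Metric.ball t (t/2))
      (bound := fun x => |lam| * ((p n t).eval x ^ 2 * ((x + t/2) ^ (lam - 1) * x ^ α * Real.exp (-x))
        + (p n t).eval x ^ 2 * ((x + 2*t) ^ (lam - 1) * x ^ α * Real.exp (-x))))
      (Metric.ball_mem_nhds t (by positivity)) ?_ ?_ ?_ ?_ ?_ ?_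
    · exact main.2
    · -- eventual measurability
      filter_upwards [Ioi_mem_nhds ht0] with s hs0
      exact (weight_integrable_sq (p n t) s lam α hs0 hα').aestronglyMeasurable
    · exact weight_integrable_sq (p n t) t lam α ht0 hα'
    · -- measurability of F' t
      exact ((weight_integrable_sq (p n t) t (lam - 1) α ht0 hα').const_mul
        lam).aestronglyMeasurable.congr (Filter.Eventually.of_forall fun x => by ring)
    · -- bound
      rw [ae_restrict_iff' measurableSet_Ioi]
      refine Filter.Eventually.of_forall (fun x hx => ?_)
      intro s hsball
      have hx0 : (0:ℝ) < x := hx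
      have hsl : t/2 < s ∧ s < 3*(t/2) := by
        have := Metric.mem_ball.mp hsball
        rw [Real.dist_eq, abs_lt] at this
        constructor <;> linarith [this.1, this.2]
      have hxs : (0:ℝ) < x + s := by linarith [hsl.1]
      have hxt2 : (0:ℝ) < x + t/2 := by linarith
      have hmono : (x + s) ^ (lam - 1) ≤ (x + t/2) ^ (lam - 1) + (x + 2*t) ^ (lam - 1) := by
        rcases le_or_gt 0 (lam - 1) with hl | hl
        · have h1 : (x + s) ^ (lam - 1) ≤ (x + 2*t) ^ (lam - 1) :=
            Real.rpow_le_rpow hxs.le (by linarith [hsl.2]) hl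
          have h2 : (0:ℝ) ≤ (x + t/2) ^ (lam - 1) := Real.rpow_nonneg hxt2.le _
          linarith
        · have h1 : (x + s) ^ (lam - 1) ≤ (x + t/2) ^ (lam - 1) :=
            Real.rpow_le_rpow_of_nonpos hxt2 (by linarith [hsl.1]) hl.le
          have h2 : (0:ℝ) ≤ (x + 2*t) ^ (lam - 1) := Real.rpow_nonneg (by linarith) _
          linarith
      have habs : ‖(p n t).eval x ^ 2 * (lam * (x + s) ^ (lam - 1) * x ^ α * Real.exp (-x))‖
          = (p n t).eval x ^ 2 * (|lam| * ((x + s) ^ (lam - 1) * (x ^ α * Real.exp (-x)))) := by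
        rw [Real.norm_eq_abs, abs_mul, abs_of_nonneg (sq_nonneg ((p n t).eval x)),
          abs_mul, abs_mul, abs_mul,
          abs_of_nonneg (Real.rpow_nonneg hxs.le (lam - 1)),
          abs_of_nonneg (Real.rpow_nonneg hx0.le α),
          abs_of_nonneg (Real.exp_pos (-x)).le]
        ring
      show ‖(p n t).eval x ^ 2 * (lam * (x + s) ^ (lam - 1) * x ^ α * Real.exp (-x))‖
          ≤ |lam| * ((p n t).eval x ^ 2 * ((x + t/2) ^ (lam - 1) * x ^ α * Real.exp (-x))
            + (p n t).eval x ^ 2 * ((x + 2*t) ^ (lam - 1) * x ^ α * Real.exp (-x)))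
      rw [habs]
      have h5 := mul_le_mul_of_nonneg_left hmono
        (show (0:ℝ) ≤ (p n t).eval x ^ 2 * |lam| * (x ^ α * Real.exp (-x)) by positivity)
      nlinarith [h5]
    · -- integrability of bound
      exact ((weight_integrable_sq (p n t) (t/2) (lam - 1) α (by positivity) hα').add
        (weight_integrable_sq (p n t) (2*t) (lam - 1) α (by positivity) hα')).const_mul |lam|
    · -- differentiability in s
      rw [ae_restrict_iff' measurableSet_Ioi]
      refine Filter.Eventually.of_forall (fun x hx => ?_)
      intro s hsball
      have hx0 : (0:ℝ) < x := hx
      have hsl : t/2 < s := by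
        have := Metric.mem_ball.mp hsball
        rw [Real.dist_eq, abs_lt] at this
        linarith [this.1]
      have hxs : (0:ℝ) < x + s := by linarith
      have h1 : HasDerivAt (fun u : ℝ => (x + u) ^ lam) (lam * (x + s) ^ (lam - 1)) s := by
        have hi : HasDerivAt (fun u : ℝ => x + u) 1 s := (hasDerivAt_id s).const_add x
        have ho := Real.hasDerivAt_rpow_const (x := x + s) (p := lam) (Or.inl hxs.ne')
        simpa [Function.comp_def] using ho.comp s hi
      have h2 := (h1.const_mul ((p n t).eval x ^ 2)).mul_const (x ^ α * Real.exp (-x))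
      have hfun : (fun u : ℝ => (p n t).eval x ^ 2 * (x + u) ^ lam * (x ^ α * Real.exp (-x)))
          = fun u : ℝ => (p n t).eval x ^ 2 * ((x + u) ^ lam * x ^ α * Real.exp (-x)) := by
        funext u; ring
      rw [hfun] at h2
      exact h2.congr_deriv (by ring)
  have hd' : deriv (fun u => h n u) t
      = ∫ x in Set.Ioi (0:ℝ),
          (p n t).eval x ^ 2 * (lam * (x + t) ^ (lam - 1) * x ^ α * Real.exp (-x)) := by
    have hh := (hdiff t ht).hasDerivAt
    have hG : HasDerivAt (fun s => (∫ x in Set.Ioi (0:ℝ),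
        (p n t).eval x ^ 2 * ((x + s) ^ lam * x ^ α * Real.exp (-x))) - h n s)
        ((∫ x in Set.Ioi (0:ℝ),
          (p n t).eval x ^ 2 * (lam * (x + t) ^ (lam - 1) * x ^ α * Real.exp (-x)))
          - deriv (fun u => h n u) t) t := hFderiv.sub hh
    have hlocal : IsLocalMin (fun s => (∫ x in Set.Ioi (0:ℝ),
        (p n t).eval x ^ 2 * ((x + s) ^ lam * x ^ α * Real.exp (-x))) - h n s) t := by
      filter_upwards [hIopen.mem_nhds ht] with s hsI
      have h1 := hmin s hsI
      have h2 : (∫ x in Set.Ioi (0:ℝ),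
          (p n t).eval x ^ 2 * ((x + t) ^ lam * x ^ α * Real.exp (-x))) = h n t :=
        (hnorm t ht).symm
      linarith
    have hz := hlocal.hasDerivAt_eq_zero hG
    linarith [hz]
  -- integration by parts
  have hibp : (∫ x in Set.Ioi (0:ℝ),
        (p n t).eval x ^ 2 * (lam * (x + t) ^ (lam - 1) * x ^ α * Real.exp (-x)))
      = h n t - α * ∫ x in Set.Ioi (0:ℝ),
          (p n t).eval x ^ 2 * ((x + t) ^ lam * x ^ (α - 1) * Real.exp (-x)) := by
    have iA : IntegrableOn (fun x : ℝ =>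
        (p n t).eval x * (Polynomial.derivative (p n t)).eval x *
          ((x + t) ^ lam * x ^ α * Real.exp (-x))) (Set.Ioi (0:ℝ)) :=
      weight_integrable_mul (p n t) (Polynomial.derivative (p n t)) t lam α ht0 hα'
    have iB : IntegrableOn (fun x : ℝ =>
        (p n t).eval x ^ 2 * ((x + t) ^ (lam - 1) * x ^ α * Real.exp (-x))) (Set.Ioi (0:ℝ)) :=
      weight_integrable_sq (p n t) t (lam - 1) α ht0 hα'
    have iC : IntegrableOn (fun x : ℝ =>
        (p n t).eval x ^ 2 * ((x + t) ^ lam * x ^ (α - 1) * Real.exp (-x))) (Set.Ioi (0:ℝ)) :=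
      weight_integrable_sq (p n t) t lam (α - 1) ht0 (by linarith)
    have iD : IntegrableOn (fun x : ℝ =>
        (p n t).eval x ^ 2 * ((x + t) ^ lam * x ^ α * Real.exp (-x))) (Set.Ioi (0:ℝ)) :=
      weight_integrable_sq (p n t) t lam α ht0 hα'
    have iA2 : IntegrableOn (fun x : ℝ => 2 * ((p n t).eval x *
        (Polynomial.derivative (p n t)).eval x * ((x + t) ^ lam * x ^ α * Real.exp (-x))))
        (Set.Ioi (0:ℝ)) := iA.const_mul 2
    have iB2 : IntegrableOn (fun x : ℝ => lam * ((p n t).eval x ^ 2 *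
        ((x + t) ^ (lam - 1) * x ^ α * Real.exp (-x)))) (Set.Ioi (0:ℝ)) := iB.const_mul lam
    have iC2 : IntegrableOn (fun x : ℝ => α * ((p n t).eval x ^ 2 *
        ((x + t) ^ lam * x ^ (α - 1) * Real.exp (-x)))) (Set.Ioi (0:ℝ)) := iC.const_mul α
    have iAB : IntegrableOn (fun x : ℝ => 2 * ((p n t).eval x *
        (Polynomial.derivative (p n t)).eval x * ((x + t) ^ lam * x ^ α * Real.exp (-x)))
        + lam * ((p n t).eval x ^ 2 * ((x + t) ^ (lam - 1) * x ^ α * Real.exp (-x))))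
        (Set.Ioi (0:ℝ)) := iA2.add iB2
    have iABC : IntegrableOn (fun x : ℝ => 2 * ((p n t).eval x *
        (Polynomial.derivative (p n t)).eval x * ((x + t) ^ lam * x ^ α * Real.exp (-x)))
        + lam * ((p n t).eval x ^ 2 * ((x + t) ^ (lam - 1) * x ^ α * Real.exp (-x)))
        + α * ((p n t).eval x ^ 2 * ((x + t) ^ lam * x ^ (α - 1) * Real.exp (-x))))
        (Set.Ioi (0:ℝ)) := iAB.add iC2
    have iABCD : IntegrableOn (fun x : ℝ => 2 * ((p n t).eval x *
        (Polynomial.derivative (p n t)).eval x * ((x + t) ^ lam * x ^ α * Real.exp (-x)))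
        + lam * ((p n t).eval x ^ 2 * ((x + t) ^ (lam - 1) * x ^ α * Real.exp (-x)))
        + α * ((p n t).eval x ^ 2 * ((x + t) ^ lam * x ^ (α - 1) * Real.exp (-x)))
        - (p n t).eval x ^ 2 * ((x + t) ^ lam * x ^ α * Real.exp (-x)))
        (Set.Ioi (0:ℝ)) := iABC.sub iD
    have hder : ∀ x ∈ Set.Ioi (0:ℝ), HasDerivAt
        (fun y : ℝ => (p n t).eval y ^ 2 * ((y + t) ^ lam * y ^ α * Real.exp (-y)))
        (2 * ((p n t).eval x * (Polynomial.derivative (p n t)).eval x *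
            ((x + t) ^ lam * x ^ α * Real.exp (-x)))
          + lam * ((p n t).eval x ^ 2 * ((x + t) ^ (lam - 1) * x ^ α * Real.exp (-x)))
          + α * ((p n t).eval x ^ 2 * ((x + t) ^ lam * x ^ (α - 1) * Real.exp (-x)))
          - (p n t).eval x ^ 2 * ((x + t) ^ lam * x ^ α * Real.exp (-x))) x := by
      intro x hx
      have hx0 : (0:ℝ) < x := hx
      have hxt : (0:ℝ) < x + t := by linarith
      have A1 : HasDerivAt (fun y : ℝ => (p n t).eval y ^ 2)
          (2 * (p n t).eval x * (Polynomial.derivative (p n t)).eval x) x := by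
        simpa [Pi.pow_def] using ((p n t).hasDerivAt x).pow 2
      have A2 : HasDerivAt (fun y : ℝ => (y + t) ^ lam) (lam * (x + t) ^ (lam - 1)) x := by
        have hi : HasDerivAt (fun y : ℝ => y + t) 1 x := (hasDerivAt_id x).add_const t
        simpa [Function.comp_def] using (Real.hasDerivAt_rpow_const (x := x + t) (p := lam)
          (Or.inl hxt.ne')).comp x hi
      have A3 : HasDerivAt (fun y : ℝ => y ^ α) (α * x ^ (α - 1)) x :=
        Real.hasDerivAt_rpow_const (Or.inl hx0.ne')
      have A4 : HasDerivAt (fun y : ℝ => Real.exp (-y)) (-Real.exp (-x)) x := by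
        simpa [Function.comp_def] using (Real.hasDerivAt_exp (-x)).comp x (hasDerivAt_neg x)
      have B := (A2.mul A3).mul A4
      have C := A1.mul B
      simp only [Pi.mul_def] at C
      exact C.congr_deriv (by ring)
    have hcont : ContinuousWithinAt
        (fun y : ℝ => (p n t).eval y ^ 2 * ((y + t) ^ lam * y ^ α * Real.exp (-y)))
        (Set.Ici (0:ℝ)) 0 := by
      refine (ContinuousAt.mul ?_ (ContinuousAt.mul (ContinuousAt.mul ?_ ?_) ?_)).continuousWithinAt
      · exact ((p n t).continuous_aeval.pow 2).continuousAt
      · exact (continuousAt_id.add continuousAt_const).rpow_const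
          (Or.inl (by simpa using ht0.ne'))
      · exact continuousAt_id.rpow_const (Or.inr hα.le)
      · exact (Real.continuous_exp.comp continuous_neg).continuousAt
    have htend : Filter.Tendsto
        (fun y : ℝ => (p n t).eval y ^ 2 * ((y + t) ^ lam * y ^ α * Real.exp (-y)))
        Filter.atTop (nhds 0) := by
      obtain ⟨C, hC0, _, hC2⟩ := poly_abs_eval_le ((p n t) ^ 2)
      have h1t : (0:ℝ) < 1 + t := by linarith
      have hg : Filter.Tendsto (fun y : ℝ => (C * (1+t) ^ |lam|) *
          (y ^ ((((p n t) ^ 2).natDegree : ℝ) + |lam| + α) * Real.exp (-y)))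
          Filter.atTop (nhds 0) := by
        have h0 := tendsto_rpow_mul_exp_neg_mul_atTop_nhds_zero
          ((((p n t) ^ 2).natDegree : ℝ) + |lam| + α) 1 one_pos
        have h1 := h0.const_mul (C * (1+t) ^ |lam|)
        simpa using h1
      refine squeeze_zero_norm' ?_ hg
      filter_upwards [Filter.eventually_ge_atTop (1:ℝ)] with y hy
      have hy0 : (0:ℝ) < y := lt_of_lt_of_le one_pos hy
      have hyt : (0:ℝ) < y + t := by linarith
      have he : (0:ℝ) < Real.exp (-y) := Real.exp_pos _
      have e1 : (p n t).eval y ^ 2 ≤ C * y ^ (((p n t) ^ 2).natDegree : ℝ) := by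
        have := hC2 y hy
        rwa [Polynomial.eval_pow, abs_of_nonneg (sq_nonneg _)] at this
      have e2 : (y + t) ^ lam ≤ (1+t) ^ |lam| * y ^ |lam| := by
        have s1 : (y + t) ^ lam ≤ (y + t) ^ |lam| :=
          Real.rpow_le_rpow_of_exponent_le (by linarith) (le_abs_self lam)
        have s2 : (y + t) ^ |lam| ≤ ((1+t) * y) ^ |lam| := by
          apply Real.rpow_le_rpow hyt.le _ (abs_nonneg _)
          nlinarith
        rw [Real.mul_rpow h1t.le hy0.le] at s2
        linarith
      have m1 : (y + t) ^ lam * (y ^ α * Real.exp (-y))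
          ≤ ((1+t) ^ |lam| * y ^ |lam|) * (y ^ α * Real.exp (-y)) :=
        mul_le_mul_of_nonneg_right e2 (by positivity)
      have m2 := mul_le_mul e1 m1 (by positivity)
        (by positivity : (0:ℝ) ≤ C * y ^ (((p n t) ^ 2).natDegree : ℝ))
      have e4 : y ^ (((p n t) ^ 2).natDegree : ℝ) * y ^ |lam| * y ^ α
          = y ^ ((((p n t) ^ 2).natDegree : ℝ) + |lam| + α) := by
        rw [← Real.rpow_add hy0, ← Real.rpow_add hy0]
      have e5 : (C * y ^ (((p n t) ^ 2).natDegree : ℝ)) *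
          (((1+t) ^ |lam| * y ^ |lam|) * (y ^ α * Real.exp (-y)))
          = (C * (1+t) ^ |lam|) *
            (y ^ ((((p n t) ^ 2).natDegree : ℝ) + |lam| + α) * Real.exp (-y)) := by
        rw [← e4]; ring
      rw [Real.norm_eq_abs, abs_of_nonneg (by positivity :
        (0:ℝ) ≤ (p n t).eval y ^ 2 * ((y + t) ^ lam * y ^ α * Real.exp (-y)))]
      nlinarith [m2, e5]
    have hftc := integral_Ioi_of_hasDerivAt_of_tendsto hcont hder iABCD htend
    have hΦ0 : (p n t).eval 0 ^ 2 * ((0 + t) ^ lam * (0:ℝ) ^ α * Real.exp (-0)) = 0 := by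
      rw [Real.zero_rpow hα.ne']
      ring
    rw [hΦ0, sub_zero] at hftc
    rw [integral_sub iABC iD, integral_add iAB iC2, integral_add iA2 iB2,
      integral_const_mul, integral_const_mul, integral_const_mul] at hftc
    have hsp : (∫ x in Set.Ioi (0:ℝ), (p n t).eval x * (Polynomial.derivative (p n t)).eval x *
        ((x + t) ^ lam * x ^ α * Real.exp (-x))) = 0 := by
      apply hspan t ht n le_rfl
      have := Polynomial.degree_derivative_lt hq0
      rwa [hqdeg] at this
    have hDv : (∫ x in Set.Ioi (0:ℝ),
          (p n t).eval x ^ 2 * (lam * (x + t) ^ (lam - 1) * x ^ α * Real.exp (-x)))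
        = ∫ x in Set.Ioi (0:ℝ),
          lam * ((p n t).eval x ^ 2 * ((x + t) ^ (lam - 1) * x ^ α * Real.exp (-x))) :=
      setIntegral_congr_fun measurableSet_Ioi (fun x _ => by ring)
    rw [hDv, integral_const_mul]
    rw [hsp, ← hnorm t ht] at hftc
    linarith [hftc]
  have hht : 0 < h n t := hpos n t ht
  have hJ : (∫ x in Set.Ioi (0:ℝ),
        (p n t).eval x ^ 2 * ((x + t) ^ lam * x ^ α * Real.exp (-x)) / x)
      = ∫ x in Set.Ioi (0:ℝ),
        (p n t).eval x ^ 2 * ((x + t) ^ lam * x ^ (α - 1) * Real.exp (-x)) := by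
    apply setIntegral_congr_fun measurableSet_Ioi
    intro x hx
    have hx0 : (0:ℝ) < x := hx
    show (p n t).eval x ^ 2 * ((x + t) ^ lam * x ^ α * Real.exp (-x)) / x
        = (p n t).eval x ^ 2 * ((x + t) ^ lam * x ^ (α - 1) * Real.exp (-x))
    rw [Real.rpow_sub_one hx0.ne']
    field_simp
  have hev : (fun u => Real.log ((h n u) ^ (-(1:ℝ) / 2)))
      =ᶠ[nhds t] (fun u => (-(1:ℝ) / 2) * Real.log (h n u)) := by
    filter_upwards [hIopen.mem_nhds ht] with u hu
    rw [Real.log_rpow (hpos n u hu)]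
  rw [hev.deriv_eq]
  have hlog : HasDerivAt (fun u => (-(1:ℝ) / 2) * Real.log (h n u))
      ((-(1:ℝ) / 2) * ((h n t)⁻¹ * deriv (fun u => h n u) t)) t := by
    have h1 : HasDerivAt (fun u => Real.log (h n u))
        ((h n t)⁻¹ * deriv (fun u => h n u) t) t := by
      have h2 := (Real.hasDerivAt_log hht.ne').comp t (hdiff t ht).hasDerivAt
      simpa [Function.comp_def] using h2
    exact h1.const_mul _
  rw [hlog.deriv, hJ, hd', hibp]
  field_simp
  ring
end

section
/- (Reduction of the third-order equation to Painlevé V.) Let α, λ ∈ ℝ. Suppose r : (0,∞) → ℝ is three times continuously differentiable and y : (0,∞) → ℝ is twice continuously differentiable with y(s) ≠ 0 and y(s) ≠ 1 for all s > 0, related by r′(s) = y(s)/(2(1 − y(s))). If r satisfies for all s > 0 the third-order equation 8s² r′ (2r′ + 1) r‴ − 4s² (1 + 4r′)(r″)² + 8s r′ (2r′ + 1) r″ − 4s (r′)² (2r′ + 1)² + λ² (2r′ + 1)² − 4α² (r′)² = 0, then y satisfies for all s > 0 the Painlevé V equation y″ = ( 1/(2y) + 1/(y − 1) ) (y′)²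 − y′/s + ((y − 1)²/(2s²)) ( α² y − λ²/y ) + y/(2s). -/
open MeasureTheory Set Filter

set_option maxHeartbeats 1000000 in
/-- if `r` solves the third-order nonlinear equation and
`r′(s) = y(s)/(2(1 − y(s)))`, then `y` solves the particular Painlevé V equation
`y″ = (1/(2y) + 1/(y−1)) (y′)² − y′/s + ((y−1)²/(2s²))(α² y − λ²/y) + y/(2s)`. -/
theorem third_order_reduces_to_painleveV
    (α lam : ℝ) (r y : ℝ → ℝ)
    (hr : ContDiffOn ℝ 3 r (Set.Ioi (0 : ℝ)))
    (hy : ContDiffOn ℝ 2 y (Set.Ioi (0 : ℝ)))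
    (hy0 : ∀ s ∈ Set.Ioi (0 : ℝ), y s ≠ 0)
    (hy1 : ∀ s ∈ Set.Ioi (0 : ℝ), y s ≠ 1)
    (hrel : ∀ s ∈ Set.Ioi (0 : ℝ), deriv r s = y s / (2 * (1 - y s)))
    (hODE : ∀ s ∈ Set.Ioi (0 : ℝ),
      8 * s ^ 2 * deriv r s * (2 * deriv r s + 1) * deriv (deriv (deriv r)) s
        - 4 * s ^ 2 * (1 + 4 * deriv r s) * (deriv (deriv r) s) ^ 2
        + 8 * s * deriv r s * (2 * deriv r s + 1) * deriv (deriv r) s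
        - 4 * s * (deriv r s) ^ 2 * (2 * deriv r s + 1) ^ 2
        + lam ^ 2 * (2 * deriv r s + 1) ^ 2
        - 4 * α ^ 2 * (deriv r s) ^ 2 = 0) :
    ∀ s ∈ Set.Ioi (0 : ℝ),
      deriv (deriv y) s
        = (1 / (2 * y s) + 1 / (y s - 1)) * (deriv y s) ^ 2
          - deriv y s / s
          + (y s - 1) ^ 2 / (2 * s ^ 2) * (α ^ 2 * y s - lam ^ 2 / y s)
          + y s / (2 * s) := by
  have hO : IsOpen (Set.Ioi (0:ℝ)) := isOpen_Ioi
  have hydiff : ∀ t ∈ Set.Ioi (0:ℝ), DifferentiableAt ℝ y t := fun t ht =>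
    ((hy.differentiableOn (by norm_num)).differentiableAt (hO.mem_nhds ht))
  have hy' : ContDiffOn ℝ 1 (deriv y) (Set.Ioi (0:ℝ)) :=
    hy.deriv_of_isOpen hO (by norm_num)
  have hy'diff : ∀ t ∈ Set.Ioi (0:ℝ), DifferentiableAt ℝ (deriv y) t := fun t ht =>
    ((hy'.differentiableOn (by norm_num)).differentiableAt (hO.mem_nhds ht))
  -- second derivative of r
  have h2 : ∀ t ∈ Set.Ioi (0:ℝ), deriv (deriv r) t = deriv y t / (2 * (1 - y t)^2) := by
    intro t ht
    have h1t : (2:ℝ) * (1 - y t) ≠ 0 := by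
      have := hy1 t ht
      intro h; apply this; nlinarith [h]
    have hg : HasDerivAt (fun u => y u / (2 * (1 - y u)))
        ((deriv y t * (2 * (1 - y t)) - y t * (2 * (0 - deriv y t))) / (2 * (1 - y t))^2) t := by
      exact ((hydiff t ht).hasDerivAt).div
        (((hasDerivAt_const t (1:ℝ)).sub (hydiff t ht).hasDerivAt).const_mul 2) h1t
    have heq : deriv r =ᶠ[nhds t] fun u => y u / (2 * (1 - y u)) := by
      filter_upwards [hO.mem_nhds ht] with u hu using hrel u hu
    rw [heq.deriv_eq, hg.deriv]
    have h2t : (1:ℝ) - y t ≠ 0 := by intro h; apply h1t; rw [h]; ring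
    field_simp
    ring
  intro s hs
  have hs0 : (0:ℝ) < s := hs
  have hsne : s ≠ 0 := ne_of_gt hs0
  have hA0 : y s ≠ 0 := hy0 s hs
  have hA1 : y s ≠ 1 := hy1 s hs
  have h2sne : (2:ℝ) - 2 * y s ≠ 0 := by intro h; apply hA1; linarith
  -- third derivative of r
  have hsub : (1:ℝ) - y s ≠ 0 := by intro hh; apply hA1; linarith
  have hg3 : HasDerivAt (fun t => deriv y t / (2 * (1 - y t)^2))
      ((deriv (deriv y) s * (2 * (1 - y s)^2)
        - deriv y s * (2 * (2 * (1 - y s)^(2-1) * (0 - deriv y s)))) / (2 * (1 - y s)^2)^2) s := by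
    exact ((hy'diff s hs).hasDerivAt).div
      ((((hasDerivAt_const s (1:ℝ)).sub ((hydiff s hs).hasDerivAt)).pow 2).const_mul 2)
      (by positivity)
  have heq2 : deriv (deriv r) =ᶠ[nhds s] fun t => deriv y t / (2 * (1 - y t)^2) := by
    filter_upwards [hO.mem_nhds hs] with u hu using h2 u hu
  have h3 : deriv (deriv (deriv r)) s
      = deriv (deriv y) s / (2 * (1 - y s)^2) + (deriv y s)^2 / (1 - y s)^3 := by
    rw [heq2.deriv_eq, hg3.deriv]
    field_simp
    ring
  have h := hODE s hs
  rw [hrel s hs, h2 s hs, h3] at h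
  have hA1' : y s - 1 ≠ 0 := sub_ne_zero.mpr hA1
  field_simp at h
  have key : (deriv (deriv y) s * (2 * y s * (y s - 1) * s * (2 * s ^ 2 * y s) * (2 * s))
      - ((((y s - 1 + 2 * y s) * deriv y s ^ 2 * s - 2 * y s * (y s - 1) * deriv y s) * (2 * s ^ 2 * y s) +
            (y s - 1) ^ 2 * (α ^ 2 * y s * y s - lam ^ 2) * (2 * y s * (y s - 1) * s)) * (2 * s) +
          y s * (2 * y s * (y s - 1) * s * (2 * s ^ 2 * y s))))
      * (2 ^ 15 * (y s - 1) ^ 19) = 0 := by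
    linear_combination (-(y s * s ^ 2) / 2 * (2 ^ 15 * (y s - 1) ^ 19)) * h
  have hmul : (2:ℝ) ^ 15 * (y s - 1) ^ 19 ≠ 0 :=
    mul_ne_zero (by norm_num) (pow_ne_zero _ hA1')
  have hGG : deriv (deriv y) s * (2 * y s * (y s - 1) * s * (2 * s ^ 2 * y s) * (2 * s))
      = ((((y s - 1 + 2 * y s) * deriv y s ^ 2 * s - 2 * y s * (y s - 1) * deriv y s) * (2 * s ^ 2 * y s) +
            (y s - 1) ^ 2 * (α ^ 2 * y s * y s - lam ^ 2) * (2 * y s * (y s - 1) * s)) * (2 * s) +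
          y s * (2 * y s * (y s - 1) * s * (2 * s ^ 2 * y s))) := by
    have := (mul_eq_zero.mp key).resolve_right hmul
    linarith
  field_simp
  apply mul_left_cancel₀ (mul_ne_zero (by positivity : (4:ℝ) * s ^ 2 ≠ 0) hA0)
  linear_combination hGG
end
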